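/- arXiv:2006.15785 — 2 statements merged into one kernel-verified Lean document; each statement's English description precedes it below -/
import Mathlib

section
/- Target-sample likelihood ratio: Let n_D > 0 and 0 < c_0 ≤ 1/4 in the construction of the target distributions D_±. For Z ∼ Γ_−, the probability that D_+(Z_{N+1})/D_−(Z_{N+1}) ≥ 1 is at least 1/84. -/
open MeasureTheory Finset

noncomputable section

namespace Paper

universe u

section Basic

variable {X : Type u} [MeasurableSpace X]

/-- 0-1 risk of a classifier under a distribution on `X × Bool`. -/
def risk (P : Measure (X × Bool)) (h : X → Bool) : ℝ :=
  (P {p | h p.1 ≠ p.2}).toReal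

/-- Disagreement pseudo-distance `P(h ≠ h')` under the marginal. -/
def dis (P : Measure (X × Bool)) (h h' : X → Bool) : ℝ :=
  (P {p | h p.1 ≠ h' p.1}).toReal

/-- Excess risk over the best in class. -/
def excess (H : Set (X → Bool)) (P : Measure (X × Bool)) (h : X → Bool) : ℝ :=
  risk P h - ⨅ h' : H, risk P (h' : X → Bool)

/-- `h` is a risk minimizer in `H` for `P`. -/
def IsOpt (H : Set (X → Bool)) (P : Measure (X × Bool)) (h : X → Bool) : Prop :=
  h ∈ H ∧ ∀ h' ∈ H, risk P h ≤ risk P h'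

/-- Bernstein class condition with respect to a given minimizer. -/
def BernsteinAt (H : Set (X → Bool)) (P : Measure (X × Bool)) (hstar : X → Bool)
    (Cb β : ℝ) : Prop :=
  IsOpt H P hstar ∧ ∀ h ∈ H, dis P h hstar ≤ Cb * excess H P h ^ β

/-- Bernstein class condition with parameters `(Cb, β)`. -/
def Bernstein (H : Set (X → Bool)) (P : Measure (X × Bool)) (Cb β : ℝ) : Prop :=
  ∃ hstar, BernsteinAt H P hstar Cb β

/-- `P` has transfer exponent `(Cr, ρ)` with respect to `D`. -/
def Transfer (H : Set (X → Bool)) (P D : Measure (X × Bool)) (Cr ρ : ℝ) : Prop :=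
  ∀ h ∈ H, excess H D h ≤ Cr * excess H P h ^ (1 / ρ)

/-- `H` shatters the finite set `s`. -/
def Shatters (H : Set (X → Bool)) (s : Finset X) : Prop :=
  ∀ f : X → Bool, ∃ h ∈ H, ∀ x ∈ s, h x = f x

/-- VC dimension of `H` is at most `d`. -/
def VCLE (H : Set (X → Bool)) (d : ℕ) : Prop :=
  ∀ s : Finset X, Shatters H s → s.card ≤ d

/-- VC dimension of `H` is exactly `d`. -/
def VCEq (H : Set (X → Bool)) (d : ℕ) : Prop :=
  VCLE H d ∧ ∃ s : Finset X, Shatters H s ∧ s.card = d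

/-- The positive logarithm `log x = max (ln x) 1`. -/
def plog (x : ℝ) : ℝ := max (Real.log x) 1

/-- `ε(m, δ) = (d/m) log(m/d) + (1/m) log(1/δ)`. -/
def eps (d m : ℕ) (δ : ℝ) : ℝ :=
  ((d : ℝ) / m) * plog ((m : ℝ) / d) + (1 / m) * plog (1 / δ)

/-- Empirical risk on a sample of size `m`. -/
def empRisk {m : ℕ} (S : Fin m → X × Bool) (h : X → Bool) : ℝ :=
  (∑ i, if h (S i).1 ≠ (S i).2 then (1 : ℝ) else 0) / m

/-- Excess empirical risk. -/
def empExcess {m : ℕ} (S : Fin m → X × Bool) (h h' : X → Bool) : ℝ :=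
  empRisk S h - empRisk S h'

/-- Empirical disagreement pseudo-distance. -/
def empDis {m : ℕ} (S : Fin m → X × Bool) (h h' : X → Bool) : ℝ :=
  (∑ i, if h (S i).1 ≠ h' (S i).1 then (1 : ℝ) else 0) / m

/-- `h` is an empirical risk minimizer over `H` for the sample `S`. -/
def IsERM (H : Set (X → Bool)) {m : ℕ} (S : Fin m → X × Bool) (h : X → Bool) : Prop :=
  h ∈ H ∧ ∀ h' ∈ H, empRisk S h ≤ empRisk S h'

end Basic

/-- The uniform Bernstein inequality (for VC classes and independent,
not necessarily identically distributed samples) holds with constant `C0`. -/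
def UnifBernstein (C0 : ℝ) : Prop :=
  ∀ (Y : Type u) (_ : MeasurableSpace Y) (H : Set (Y → Bool)) (d : ℕ),
    VCEq H d →
    ∀ m : ℕ, 0 < m → ∀ δ : ℝ, 0 < δ → δ < 1 →
    ∀ μ : Fin m → Measure (Y × Bool), (∀ i, IsProbabilityMeasure (μ i)) →
    ENNReal.ofReal (1 - δ) ≤
      Measure.pi μ {S : Fin m → Y × Bool | ∀ h ∈ H, ∀ h' ∈ H,
        ((∑ i, (risk (μ i) h - risk (μ i) h')) / m ≤
            empExcess S h h'
              + C0 * Real.sqrt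
                  (min ((∑ i, dis (μ i) h h') / m) (empDis S h h') * eps d m δ)
              + C0 * eps d m δ)
        ∧ ((1 / 2) * ((∑ i, dis (μ i) h h') / m) - C0 * eps d m δ ≤ empDis S h h')
        ∧ (empDis S h h' ≤ 2 * ((∑ i, dis (μ i) h h') / m) + C0 * eps d m δ)}

section Multi

variable {X : Type u} [MeasurableSpace X] {N : ℕ}

/-- The multisample distribution `Π = ∏_t P_t^{n_t}`. -/
def msM (P : Fin (N + 1) → Measure (X × Bool)) (n : Fin (N + 1) → ℕ) :
    Measure ((t : Fin (N + 1)) → Fin (n t) → X × Bool) :=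
  Measure.pi fun t => Measure.pi fun _ => P t

/-- Membership in the multisource class `M(Cr, {ρ_t}, {n_t}, Cb, β)`:
(A1) a common optimal classifier, (A2) transfer exponents to the target
`D = P (Fin.last N)`, (A3) Bernstein class condition for every task. -/
def MemClass (H : Set (X → Bool)) (P : Fin (N + 1) → Measure (X × Bool))
    (Cr : ℝ) (ρ : Fin (N + 1) → ℝ) (Cb β : ℝ) : Prop :=
  (∀ t, IsProbabilityMeasure (P t)) ∧
  (∃ hstar ∈ H, ∀ t, IsOpt H (P t) hstar) ∧
  (∀ t, Transfer H (P t) (P (Fin.last N)) Cr (ρ t)) ∧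
  (∀ t, Bernstein H (P t) Cb β)

/-- Empirical risk over the aggregation of the datasets indexed by `T`. -/
def empRiskAgg {n : Fin (N + 1) → ℕ} (Z : (t : Fin (N + 1)) → Fin (n t) → X × Bool)
    (T : Finset (Fin (N + 1))) (h : X → Bool) : ℝ :=
  (∑ t ∈ T, ∑ i, if h (Z t i).1 ≠ (Z t i).2 then (1 : ℝ) else 0) / (∑ t ∈ T, (n t : ℝ))

/-- Empirical disagreement over the aggregation of the datasets indexed by `T`. -/
def empDisAgg {n : Fin (N + 1) → ℕ} (Z : (t : Fin (N + 1)) → Fin (n t) → X × Bool)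
    (T : Finset (Fin (N + 1))) (h h' : X → Bool) : ℝ :=
  (∑ t ∈ T, ∑ i, if h (Z t i).1 ≠ h' (Z t i).1 then (1 : ℝ) else 0) / (∑ t ∈ T, (n t : ℝ))

/-- `h` is an ERM over the aggregated sample `Z^T`. -/
def IsERMAgg (H : Set (X → Bool)) {n : Fin (N + 1) → ℕ}
    (Z : (t : Fin (N + 1)) → Fin (n t) → X × Bool) (T : Finset (Fin (N + 1)))
    (h : X → Bool) : Prop :=
  h ∈ H ∧ ∀ h' ∈ H, empRiskAgg Z T h ≤ empRiskAgg Z T h'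

/-- Partial sum of sample sizes along the sorted order (real valued). -/
def NtR (n : Fin (N + 1) → ℕ) (σp : Equiv.Perm (Fin (N + 1))) (t : Fin (N + 1)) : ℝ :=
  ∑ s ∈ Finset.Iic t, (n (σp s) : ℝ)

/-- Partial sum of sample sizes along the sorted order (natural number valued). -/
def NtN (n : Fin (N + 1) → ℕ) (σp : Equiv.Perm (Fin (N + 1))) (t : Fin (N + 1)) : ℕ :=
  ∑ s ∈ Finset.Iic t, n (σp s)

/-- The average transfer exponent `ρ̄_t`. -/
def rhoBar (n : Fin (N + 1) → ℕ) (ρ : Fin (N + 1) → ℝ) (σp : Equiv.Perm (Fin (N + 1)))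
    (t : Fin (N + 1)) : ℝ :=
  (∑ s ∈ Finset.Iic t, (n (σp s) : ℝ) * ρ (σp s)) / NtR n σp t

/-- `σp` sorts the transfer exponents in nondecreasing order:
`ρ_(1) ≤ ρ_(2) ≤ … ≤ ρ_(N+1)`. -/
def SortedFor (ρ : Fin (N + 1) → ℝ) (σp : Equiv.Perm (Fin (N + 1))) : Prop :=
  ∀ i j : Fin (N + 1), i ≤ j → ρ (σp i) ≤ ρ (σp j)

/-- The oracle rate `Cr (Cc (d log(N_t/d) + log(1/δ)) / N_t)^{1/((2-β) ρ̄_t)}`. -/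
def rateB (Cr Cc β : ℝ) (d : ℕ) (δ : ℝ) (n : Fin (N + 1) → ℕ) (ρ : Fin (N + 1) → ℝ)
    (σp : Equiv.Perm (Fin (N + 1))) (t : Fin (N + 1)) : ℝ :=
  Cr * (Cc * ((d : ℝ) * plog (NtR n σp t / d) + plog (1 / δ)) / NtR n σp t)
      ^ (1 / ((2 - β) * rhoBar n ρ σp t))

/-- The minimax-lower-bound rate `(c₂ d / (N_t log² N_t))^{1/((2-β) ρ̄_t)}`. -/
def rateLow (β c2 : ℝ) (d : ℕ) (n : Fin (N + 1) → ℕ) (ρ : Fin (N + 1) → ℝ)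
    (σp : Equiv.Perm (Fin (N + 1))) (t : Fin (N + 1)) : ℝ :=
  (c2 * d / (NtR n σp t * plog (NtR n σp t) ^ 2)) ^ (1 / ((2 - β) * rhoBar n ρ σp t))

end Multi

section TwoPoint

variable {X : Type u} [MeasurableSpace X]

/-- The distribution on `{x₀, x₁} × {±1}` with marginal mass `w` at `x₁`,
regression value `η = P(Y = 1 | x₁)` and deterministic label `1` at `x₀`.
The label `+1` is encoded as `true` and `-1` as `false`. -/
def twoPt (x0 x1 : X) (w η : ℝ) : Measure (X × Bool) :=
  ENNReal.ofReal (w * η) • Measure.dirac (x1, true)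
    + ENNReal.ofReal (w * (1 - η)) • Measure.dirac (x1, false)
    + ENNReal.ofReal (1 - w) • Measure.dirac (x0, true)

/-- The sign `±1` associated with `σ : Bool`. -/
def sgn (σ : Bool) : ℝ := if σ then 1 else -1

/-- `ε = (n N_P)^{-1/(2-β)}`. -/
def epsSrc (β : ℝ) (n NP : ℕ) : ℝ := ((n * NP : ℕ) : ℝ) ^ (-(1 / (2 - β)))

/-- `ε₀ = 1 ∧ n_D^{-1/(2-β)}` (with the convention `1/0 = ∞`). -/
def epsTgt (β : ℝ) (nD : ℕ) : ℝ := (max 1 (nD : ℝ)) ^ (-(1 / (2 - β)))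

/-- The target distribution `D_σ`. -/
def Dtgt (x0 x1 : X) (β c0 : ℝ) (nD : ℕ) (σ : Bool) : Measure (X × Bool) :=
  twoPt x0 x1 (epsTgt β nD ^ β / 2) (1 / 2 + sgn σ * c0 * epsTgt β nD ^ (1 - β))

/-- The noisy source distribution `P_σ`. -/
def Psrc (x0 x1 : X) (β c1 : ℝ) (n NP : ℕ) (σ : Bool) : Measure (X × Bool) :=
  twoPt x0 x1 (c1 * epsSrc β n NP ^ β) (1 / 2 + sgn σ * epsSrc β n NP ^ (1 - β))

/-- The benign source distribution `Q_σ`. -/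
def Qsrc (x0 x1 : X) (σ : Bool) : Measure (X × Bool) :=
  twoPt x0 x1 1 ((1 + sgn σ) / 2)

/-- The mixture distribution `α_P P_σ^n + α_Q Q_σ^n` of a source block. -/
def blockM (x0 x1 : X) (β c1 : ℝ) (n NP NQ : ℕ) (σ : Bool) :
    Measure (Fin n → X × Bool) :=
  ENNReal.ofReal ((NP : ℝ) / (NP + NQ)) • Measure.pi (fun _ => Psrc x0 x1 β c1 n NP σ)
    + ENNReal.ofReal ((NQ : ℝ) / (NP + NQ)) • Measure.pi (fun _ => Qsrc x0 x1 σ)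

/-- The target block distribution `D_σ^{n_D}`. -/
def tgtM (x0 x1 : X) (β c0 : ℝ) (nD : ℕ) (σ : Bool) : Measure (Fin nD → X × Bool) :=
  Measure.pi fun _ => Dtgt x0 x1 β c0 nD σ

/-- The joint distribution `Γ_σ = (α_P P_σ^n + α_Q Q_σ^n)^N × D_σ^{n_D}`. -/
def Gamma (x0 x1 : X) (β c0 c1 : ℝ) (n nD NP NQ : ℕ) (σ : Bool) :
    Measure ((Fin (NP + NQ) → Fin n → X × Bool) × (Fin nD → X × Bool)) :=
  (Measure.pi fun _ : Fin (NP + NQ) => blockM x0 x1 β c1 n NP NQ σ).prod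
    (tgtM x0 x1 β c0 nD σ)

/-- A single source block together with the latent indicator of the mixture
component (`true` for the `P_σ` component, `false` for the `Q_σ` component). -/
def blockJ (x0 x1 : X) (β c1 : ℝ) (n NP NQ : ℕ) (σ : Bool) :
    Measure (Bool × (Fin n → X × Bool)) :=
  ENNReal.ofReal ((NP : ℝ) / (NP + NQ)) •
      (Measure.dirac true).prod (Measure.pi fun _ => Psrc x0 x1 β c1 n NP σ)
    + ENNReal.ofReal ((NQ : ℝ) / (NP + NQ)) •
      (Measure.dirac false).prod (Measure.pi fun _ => Qsrc x0 x1 σ)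

/-- The joint distribution `Γ_σ`, augmented with the latent component
indicators of the mixture blocks. -/
def GammaJ (x0 x1 : X) (β c0 c1 : ℝ) (n nD NP NQ : ℕ) (σ : Bool) :
    Measure ((Fin (NP + NQ) → Bool × (Fin n → X × Bool)) × (Fin nD → X × Bool)) :=
  (Measure.pi fun _ : Fin (NP + NQ) => blockJ x0 x1 β c1 n NP NQ σ).prod
    (tgtM x0 x1 β c0 nD σ)

/-- `N̂_σ(Z)`: number of homogeneous blocks with all points at `x₁` and label `σ`. -/
def NhatS (x1 : X) {Nn n : ℕ} (Zb : Fin Nn → Fin n → X × Bool) (σ : Bool) : ℕ :=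
  ({t | ∀ i, Zb t i = (x1, σ)} : Set (Fin Nn)).ncard

/-- `n̂_σ(Z)`: total number of points at `x₁` with label `σ`. -/
def nhatS (x1 : X) {Nn n : ℕ} (Zb : Fin Nn → Fin n → X × Bool) (σ : Bool) : ℕ :=
  ({p : Fin Nn × Fin n | Zb p.1 p.2 = (x1, σ)}).ncard

/-- `ñ_σ(Z) = n̂_σ(Z) − n N̂_σ(Z)`: number of points at `x₁` with label `σ`
excluding homogeneous blocks. -/
def ntildeS (x1 : X) {Nn n : ℕ} (Zb : Fin Nn → Fin n → X × Bool) (σ : Bool) : ℕ :=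
  nhatS x1 Zb σ - n * NhatS x1 Zb σ

/-- `N̂_P(W)`: number of homogeneous blocks generated by the `P₋` component. -/
def NhatP (x1 : X) {Nn n : ℕ} (Wb : Fin Nn → Bool × (Fin n → X × Bool)) : ℕ :=
  ({t | (Wb t).1 = true ∧ ∃ b, ∀ i, (Wb t).2 i = (x1, b)} : Set (Fin Nn)).ncard

/-- `N̂_Q(W)`: number of homogeneous blocks generated by the `Q₋` component. -/
def NhatQ (x1 : X) {Nn n : ℕ} (Wb : Fin Nn → Bool × (Fin n → X × Bool)) : ℕ :=
  ({t | (Wb t).1 = false ∧ ∃ b, ∀ i, (Wb t).2 i = (x1, b)} : Set (Fin Nn)).ncard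

end TwoPoint

section Statement11Aux

variable {X : Type u} [MeasurableSpace X] [MeasurableSingletonClass X]

namespace S11

/-- The three atoms of the two-point construction. -/
def atomPt (x0 x1 : X) : Fin 3 → X × Bool :=
  fun a => if a = 0 then (x1, true) else if a = 1 then (x1, false) else (x0, true)

/-- The probability weights of the three atoms under `D_σ`. -/
def pv (β c0 : ℝ) (nD : ℕ) (σ : Bool) : Fin 3 → ℝ := fun a =>
  if a = 0 then (epsTgt β nD ^ β / 2) * (1 / 2 + sgn σ * c0 * epsTgt β nD ^ (1 - β))
  else if a = 1 then
    (epsTgt β nD ^ β / 2) * (1 - (1 / 2 + sgn σ * c0 * epsTgt β nD ^ (1 - β)))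
  else 1 - epsTgt β nD ^ β / 2

/-- Signed count contribution of each atom. -/
def g3 : Fin 3 → ℝ := fun a => if a = 0 then 1 else if a = 1 then -1 else 0

/-- Label swap on atoms. -/
def tau : Fin 3 → Fin 3 := fun a => if a = 0 then 1 else if a = 1 then 0 else 2

/-- Signed count of a pattern. -/
def Ssum {nD : ℕ} (f : Fin nD → Fin 3) : ℝ := ∑ i, g3 (f i)

/-- Probability weight of a pattern. -/
def cwt (β c0 : ℝ) (nD : ℕ) (σ : Bool) (f : Fin nD → Fin 3) : ℝ :=
  ∏ i, pv β c0 nD σ (f i)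

/-- Sample realizing a pattern. -/
def pat (x0 x1 : X) {nD : ℕ} (f : Fin nD → Fin 3) : Fin nD → X × Bool :=
  fun i => atomPt x0 x1 (f i)

/-- The likelihood ratio of the two label probabilities at `x₁`. -/
def rr (β c0 : ℝ) (nD : ℕ) : ℝ :=
  (1 / 2 + c0 * epsTgt β nD ^ (1 - β)) / (1 / 2 - c0 * epsTgt β nD ^ (1 - β))

section Scalar

variable {β c0 : ℝ} {nD : ℕ}

lemma e_pos : 0 < epsTgt β nD :=
  Real.rpow_pos_of_pos (lt_of_lt_of_le one_pos (le_max_left _ _)) _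

lemma e_le_one (hβ1 : β < 1) : epsTgt β nD ≤ 1 :=
  Real.rpow_le_one_of_one_le_of_nonpos (le_max_left _ _)
    (by rw [neg_nonpos]; apply div_nonneg zero_le_one; linarith)

lemma et_le_one (hβ1 : β < 1) {t : ℝ} (ht : 0 ≤ t) : epsTgt β nD ^ t ≤ 1 :=
  Real.rpow_le_one e_pos.le (e_le_one hβ1) ht

lemma key (hβ1 : β < 1) (hnD : 0 < nD) : (nD : ℝ) * epsTgt β nD ^ (2 - β) = 1 := by
  have h2β : (2 : ℝ) - β ≠ 0 := by linarith
  have h1 : (1 : ℝ) ≤ (nD : ℝ) := by exact_mod_cast hnD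
  have hnd0 : (nD : ℝ) ≠ 0 := by positivity
  have he : epsTgt β nD = (nD : ℝ) ^ (-(1 / (2 - β))) := by
    rw [epsTgt, max_eq_right h1]
  rw [he, ← Real.rpow_mul (by positivity : (0 : ℝ) ≤ (nD : ℝ))]
  have hexp : -(1 / (2 - β)) * (2 - β) = -1 := by field_simp
  rw [hexp, Real.rpow_neg_one, mul_inv_cancel₀ hnd0]

lemma d_bounds (hβ0 : 0 ≤ β) (hβ1 : β < 1) (hc0 : 0 < c0) (hc0' : c0 ≤ 1 / 4) :
    0 < c0 * epsTgt β nD ^ (1 - β) ∧ c0 * epsTgt β nD ^ (1 - β) ≤ 1 / 4 := by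
  have he : (0 : ℝ) < epsTgt β nD ^ (1 - β) := Real.rpow_pos_of_pos e_pos _
  have h1 : epsTgt β nD ^ (1 - β) ≤ 1 := et_le_one hβ1 (by linarith)
  exact ⟨by positivity, by nlinarith⟩

lemma w_bounds (hβ0 : 0 ≤ β) (hβ1 : β < 1) :
    0 < epsTgt β nD ^ β / 2 ∧ epsTgt β nD ^ β / 2 ≤ 1 / 2 := by
  have he : (0 : ℝ) < epsTgt β nD ^ β := Real.rpow_pos_of_pos e_pos _
  have h1 : epsTgt β nD ^ β ≤ 1 := et_le_one hβ1 hβ0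
  exact ⟨by positivity, by linarith⟩

lemma pv_nonneg (hβ0 : 0 ≤ β) (hβ1 : β < 1) (hc0 : 0 < c0) (hc0' : c0 ≤ 1 / 4)
    (σ : Bool) (a : Fin 3) : 0 ≤ pv β c0 nD σ a := by
  obtain ⟨hd0, hd4⟩ := d_bounds (nD := nD) hβ0 hβ1 hc0 hc0'
  obtain ⟨hw0, hw2⟩ := w_bounds (nD := nD) (β := β) hβ0 hβ1
  fin_cases a <;> cases σ <;> simp [pv, sgn] <;> nlinarith

lemma pv_false_pos (hβ0 : 0 ≤ β) (hβ1 : β < 1) (hc0 : 0 < c0) (hc0' : c0 ≤ 1 / 4)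
    (a : Fin 3) : 0 < pv β c0 nD false a := by
  obtain ⟨hd0, hd4⟩ := d_bounds (nD := nD) hβ0 hβ1 hc0 hc0'
  obtain ⟨hw0, hw2⟩ := w_bounds (nD := nD) (β := β) hβ0 hβ1
  fin_cases a <;> simp [pv, sgn] <;> nlinarith

lemma sum_pv (σ : Bool) : ∑ a, pv β c0 nD σ a = 1 := by
  rw [Fin.sum_univ_three]
  simp only [pv, show ((1:Fin 3) = 0) = False from by decide,
    show ((2:Fin 3) = 0) = False from by decide, show ((2:Fin 3) = 1) = False from by decide,
    if_false, if_true]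
  ring

lemma cwt_nonneg (hβ0 : 0 ≤ β) (hβ1 : β < 1) (hc0 : 0 < c0) (hc0' : c0 ≤ 1 / 4)
    (σ : Bool) (f : Fin nD → Fin 3) : 0 ≤ cwt β c0 nD σ f :=
  Finset.prod_nonneg fun i _ => pv_nonneg hβ0 hβ1 hc0 hc0' σ (f i)

lemma sum_cwt (σ : Bool) : ∑ f : Fin nD → Fin 3, cwt β c0 nD σ f = 1 := by
  classical
  have := (Fintype.prod_sum (fun (_ : Fin nD) (a : Fin 3) => pv β c0 nD σ a)).symm
  calc ∑ f : Fin nD → Fin 3, cwt β c0 nD σ f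
      = ∏ _i : Fin nD, ∑ a, pv β c0 nD σ a := this
    _ = 1 := by rw [sum_pv]; simp

lemma rr_one_le (hβ0 : 0 ≤ β) (hβ1 : β < 1) (hc0 : 0 < c0) (hc0' : c0 ≤ 1 / 4) :
    1 ≤ rr β c0 nD := by
  obtain ⟨hd0, hd4⟩ := d_bounds (nD := nD) hβ0 hβ1 hc0 hc0'
  rw [rr, le_div_iff₀ (by linarith)]
  linarith

lemma rr_pos (hβ0 : 0 ≤ β) (hβ1 : β < 1) (hc0 : 0 < c0) (hc0' : c0 ≤ 1 / 4) :
    0 < rr β c0 nD :=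
  lt_of_lt_of_le one_pos (rr_one_le hβ0 hβ1 hc0 hc0')

lemma sgn_true : sgn true = 1 := rfl

lemma sgn_false : sgn false = -1 := rfl

lemma pv_true_eq (hβ0 : 0 ≤ β) (hβ1 : β < 1) (hc0 : 0 < c0) (hc0' : c0 ≤ 1 / 4)
    (a : Fin 3) :
    pv β c0 nD true a = rr β c0 nD ^ (g3 a) * pv β c0 nD false a := by
  obtain ⟨hd0, hd4⟩ := d_bounds (nD := nD) hβ0 hβ1 hc0 hc0'
  have hηf' : (1:ℝ) / 2 - c0 * epsTgt β nD ^ (1 - β) ≠ 0 := ne_of_gt (by linarith)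
  have hηt' : (1:ℝ) / 2 + c0 * epsTgt β nD ^ (1 - β) ≠ 0 := ne_of_gt (by linarith)
  have h4f : (4:ℝ) - c0 * epsTgt β nD ^ (1 - β) * 8 ≠ 0 := ne_of_gt (by linarith)
  have h4t : (4:ℝ) + c0 * epsTgt β nD ^ (1 - β) * 8 ≠ 0 := ne_of_gt (by linarith)
  have h0 : pv β c0 nD true 0 = rr β c0 nD ^ (g3 0) * pv β c0 nD false 0 := by
    simp only [pv, g3, rr, sgn_true, sgn_false]
    norm_num
    conv_rhs => rw [div_mul_eq_mul_div]
    rw [eq_div_iff hηf']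
    ring
  have h1 : pv β c0 nD true 1 = rr β c0 nD ^ (g3 1) * pv β c0 nD false 1 := by
    simp only [pv, g3, rr, sgn_true, sgn_false,
      show ((1:Fin 3) = 0) = False from by decide, if_false]
    norm_num [Real.rpow_neg_one]
    conv_rhs => rw [div_mul_eq_mul_div]
    rw [eq_div_iff hηt']
    ring
  have h2 : pv β c0 nD true 2 = rr β c0 nD ^ (g3 2) * pv β c0 nD false 2 := by
    simp only [pv, g3, rr, sgn_true, sgn_false,
      show ((2:Fin 3) = 0) = False from by decide,
      show ((2:Fin 3) = 1) = False from by decide, if_false]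
    norm_num
  fin_cases a
  · exact h0
  · exact h1
  · exact h2

lemma cwt_true_eq (hβ0 : 0 ≤ β) (hβ1 : β < 1) (hc0 : 0 < c0) (hc0' : c0 ≤ 1 / 4)
    (f : Fin nD → Fin 3) :
    cwt β c0 nD true f = rr β c0 nD ^ (Ssum f) * cwt β c0 nD false f := by
  have hr := rr_pos (nD := nD) hβ0 hβ1 hc0 hc0'
  calc cwt β c0 nD true f = ∏ i, rr β c0 nD ^ (g3 (f i)) * pv β c0 nD false (f i) := by
        rw [cwt]; exact Finset.prod_congr rfl fun i _ => pv_true_eq hβ0 hβ1 hc0 hc0' _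
    _ = (∏ i, rr β c0 nD ^ (g3 (f i))) * cwt β c0 nD false f := by
        rw [Finset.prod_mul_distrib]; rfl
    _ = rr β c0 nD ^ (Ssum f) * cwt β c0 nD false f := by
        rw [Ssum, Real.rpow_sum_of_pos hr]

end Scalar

section MeasureAux

variable {x0 x1 : X} {β c0 : ℝ} {nD : ℕ}

lemma atomPt_inj (hx : x0 ≠ x1) : Function.Injective (atomPt x0 x1) := by
  intro a b hab
  fin_cases a <;> fin_cases b <;>
    simp_all [atomPt, Prod.ext_iff, hx, Ne.symm hx]

lemma Dtgt_singleton (hx : x0 ≠ x1) (σ : Bool) (a : Fin 3) :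
    Dtgt x0 x1 β c0 nD σ {atomPt x0 x1 a} = ENNReal.ofReal (pv β c0 nD σ a) := by
  fin_cases a <;>
    simp [Dtgt, twoPt, atomPt, pv, Measure.add_apply, Measure.smul_apply, smul_eq_mul,
      Measure.dirac_apply, Set.indicator_apply, Prod.ext_iff, hx, Ne.symm hx]

lemma Dtgt_isProb (hβ0 : 0 ≤ β) (hβ1 : β < 1) (hc0 : 0 < c0) (hc0' : c0 ≤ 1 / 4)
    (σ : Bool) : IsProbabilityMeasure (Dtgt x0 x1 β c0 nD σ) := by
  obtain ⟨hd0, hd4⟩ := d_bounds (nD := nD) hβ0 hβ1 hc0 hc0'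
  obtain ⟨hw0, hw2⟩ := w_bounds (nD := nD) (β := β) hβ0 hβ1
  constructor
  rw [Dtgt, twoPt]
  simp only [Measure.add_apply, Measure.smul_apply, smul_eq_mul,
    Measure.dirac_apply_of_mem (Set.mem_univ _), mul_one]
  cases σ <;> simp only [sgn_true, sgn_false]
  · rw [← ENNReal.ofReal_add (by nlinarith) (by nlinarith),
      ← ENNReal.ofReal_add (by nlinarith) (by nlinarith)]
    rw [show epsTgt β nD ^ β / 2 * (1 / 2 + -1 * c0 * epsTgt β nD ^ (1 - β)) +
        epsTgt β nD ^ β / 2 * (1 - (1 / 2 + -1 * c0 * epsTgt β nD ^ (1 - β))) +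
        (1 - epsTgt β nD ^ β / 2) = 1 from by ring, ENNReal.ofReal_one]
  · rw [← ENNReal.ofReal_add (by nlinarith) (by nlinarith),
      ← ENNReal.ofReal_add (by nlinarith) (by nlinarith)]
    rw [show epsTgt β nD ^ β / 2 * (1 / 2 + 1 * c0 * epsTgt β nD ^ (1 - β)) +
        epsTgt β nD ^ β / 2 * (1 - (1 / 2 + 1 * c0 * epsTgt β nD ^ (1 - β))) +
        (1 - epsTgt β nD ^ β / 2) = 1 from by ring, ENNReal.ofReal_one]

lemma tgtM_pattern (hx : x0 ≠ x1) (hβ0 : 0 ≤ β) (hβ1 : β < 1) (hc0 : 0 < c0)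
    (hc0' : c0 ≤ 1 / 4) (σ : Bool) (f : Fin nD → Fin 3) :
    tgtM x0 x1 β c0 nD σ {pat x0 x1 f} = ENNReal.ofReal (cwt β c0 nD σ f) := by
  haveI := Dtgt_isProb (x0 := x0) (x1 := x1) (nD := nD) hβ0 hβ1 hc0 hc0' σ
  have h1 : ({pat x0 x1 f} : Set (Fin nD → X × Bool)) =
      Set.pi Set.univ (fun i => {atomPt x0 x1 (f i)}) :=
    (Set.univ_pi_singleton (pat x0 x1 f)).symm
  rw [tgtM, h1, Measure.pi_pi]
  rw [Finset.prod_congr rfl fun i _ => Dtgt_singleton hx σ (f i)]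
  exact (ENNReal.ofReal_prod_of_nonneg fun i _ => pv_nonneg hβ0 hβ1 hc0 hc0' σ (f i)).symm

lemma tgtM_image (hx : x0 ≠ x1) (hβ0 : 0 ≤ β) (hβ1 : β < 1) (hc0 : 0 < c0)
    (hc0' : c0 ≤ 1 / 4) (σ : Bool) (F : Finset (Fin nD → Fin 3)) :
    tgtM x0 x1 β c0 nD σ (pat x0 x1 '' ↑F) =
      ENNReal.ofReal (∑ f ∈ F, cwt β c0 nD σ f) := by
  have hpatinj : Function.Injective (pat x0 x1 (nD := nD)) := by
    intro f g hfg
    funext i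
    exact atomPt_inj hx (congrFun hfg i)
  have himg : pat x0 x1 '' ↑F = ⋃ f ∈ F, {pat x0 x1 f} := by
    ext W
    simp [Set.mem_image, Set.mem_iUnion, eq_comm]
  rw [himg, measure_biUnion_finset ?hd fun f _ => measurableSet_singleton _]
  · rw [Finset.sum_congr rfl fun f _ => tgtM_pattern hx hβ0 hβ1 hc0 hc0' σ f]
    exact (ENNReal.ofReal_sum_of_nonneg fun f _ => cwt_nonneg hβ0 hβ1 hc0 hc0' σ f).symm
  case hd =>
    intro f _ g _ hfg
    simp only [Set.disjoint_singleton_left, Set.mem_singleton_iff]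
    exact fun h => hfg (hpatinj h)

end MeasureAux

section CoreAux

variable {x0 x1 : X} {β c0 : ℝ} {nD : ℕ}

lemma f10 : ((1 : Fin 3) = 0) = False := by decide
lemma f20 : ((2 : Fin 3) = 0) = False := by decide
lemma f21 : ((2 : Fin 3) = 1) = False := by decide

set_option maxHeartbeats 2000000 in
lemma core (x0 x1 : X) (hx : x0 ≠ x1) (β c0 : ℝ) (nD : ℕ)
    (hβ0 : 0 ≤ β) (hβ1 : β < 1) (hnD : 0 < nD) (hc0 : 0 < c0) (hc0' : c0 ≤ 1 / 4) :
    ENNReal.ofReal (1 / 84) ≤ tgtM x0 x1 β c0 nD false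
      {W | 1 ≤ tgtM x0 x1 β c0 nD true {W} / tgtM x0 x1 β c0 nD false {W}} := by
  classical
  set e := epsTgt β nD with he_def
  have he : 0 < e := e_pos
  obtain ⟨hd0, hd4⟩ := d_bounds (nD := nD) hβ0 hβ1 hc0 hc0'
  obtain ⟨hw0, hw2⟩ := w_bounds (nD := nD) (β := β) hβ0 hβ1
  set u : ℝ := (nD : ℝ) * e with hu_def
  have hnD1 : (1 : ℝ) ≤ (nD : ℝ) := by exact_mod_cast hnD
  have hu0 : 0 < u := mul_pos (by linarith) he
  have hkey : (nD : ℝ) * e ^ (2 - β) = 1 := key hβ1 hnD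
  have hb2 : e ^ β * e ^ (2 - β) = e * e := by
    rw [← Real.rpow_add he, show β + (2 - β) = 2 by ring,
      show (2 : ℝ) = ((2 : ℕ) : ℝ) by norm_num, Real.rpow_natCast]
    ring
  have hu2 : (nD : ℝ) * e ^ β = u * u := by
    calc (nD : ℝ) * e ^ β = ((nD : ℝ) * e ^ β) * ((nD : ℝ) * e ^ (2 - β)) := by
          rw [hkey]; ring
      _ = ((nD : ℝ) * (nD : ℝ)) * (e ^ β * e ^ (2 - β)) := by ring
      _ = u * u := by rw [hb2, hu_def]; ring
  have h1b : e ^ (1 - β) * e = e ^ (2 - β) := by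
    calc e ^ (1 - β) * e = e ^ (1 - β) * e ^ (1 : ℝ) := by rw [Real.rpow_one]
      _ = e ^ (2 - β) := by rw [← Real.rpow_add he, show 1 - β + 1 = 2 - β by ring]
  have hdu : (c0 * e ^ (1 - β)) * u = c0 := by
    calc (c0 * e ^ (1 - β)) * u = c0 * ((nD : ℝ) * (e ^ (1 - β) * e)) := by
          rw [hu_def]; ring
      _ = c0 * ((nD : ℝ) * e ^ (2 - β)) := by rw [h1b]
      _ = c0 := by rw [hkey]; ring
  set K : ℝ := (c0 + 3 / 2) * u with hK_def
  have hK0 : 0 ≤ K := le_of_lt (mul_pos (by linarith) hu0)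
  have hr1 : 1 ≤ rr β c0 nD := rr_one_le hβ0 hβ1 hc0 hc0'
  have hrK : rr β c0 nD ^ K ≤ 61 := by
    have hrle : rr β c0 nD ≤ Real.exp (8 * (c0 * e ^ (1 - β))) := by
      have h18 : rr β c0 nD ≤ 1 + 8 * (c0 * e ^ (1 - β)) := by
        rw [rr, div_le_iff₀ (by linarith)]
        nlinarith
      have := Real.add_one_le_exp (8 * (c0 * e ^ (1 - β)))
      linarith
    calc rr β c0 nD ^ K ≤ (Real.exp (8 * (c0 * e ^ (1 - β)))) ^ K :=
          Real.rpow_le_rpow (by linarith) hrle hK0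
      _ = Real.exp (8 * (c0 * e ^ (1 - β)) * K) := (Real.exp_mul _ _).symm
      _ ≤ Real.exp 4 := by
          apply Real.exp_le_exp.2
          have heq : 8 * (c0 * e ^ (1 - β)) * K = 8 * c0 * (c0 + 3 / 2) := by
            calc 8 * (c0 * e ^ (1 - β)) * K
                = 8 * (c0 + 3 / 2) * ((c0 * e ^ (1 - β)) * u) := by rw [hK_def]; ring
              _ = 8 * c0 * (c0 + 3 / 2) := by rw [hdu]; ring
          rw [heq]; nlinarith
      _ ≤ 61 := by
          rw [show (4 : ℝ) = ((4 : ℕ) * (1 : ℝ)) by norm_num, Real.exp_nat_mul]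
          calc Real.exp 1 ^ 4 ≤ (2.7182818286 : ℝ) ^ 4 :=
                pow_le_pow_left₀ (Real.exp_pos 1).le Real.exp_one_lt_d9.le 4
            _ ≤ 61 := by norm_num
  -- the finite-sum model
  set A0 : Finset (Fin nD → Fin 3) := Finset.univ.filter fun f => 0 ≤ Ssum f with hA0
  set A0' : Finset (Fin nD → Fin 3) := Finset.univ.filter fun f => Ssum f ≤ 0 with hA0'
  set Bs : Finset (Fin nD → Fin 3) :=
    Finset.univ.filter fun f => 0 ≤ Ssum f ∧ Ssum f ≤ K with hBs
  set bad : Finset (Fin nD → Fin 3) := Finset.univ.filter fun f => K < Ssum f with hbad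
  have hcnn : ∀ σ f, 0 ≤ cwt β c0 nD σ f := fun σ f => cwt_nonneg hβ0 hβ1 hc0 hc0' σ f
  -- label swap
  have htau0 : tau 0 = 1 := by decide
  have htau1 : tau 1 = 0 := by decide
  have htau2' : tau 2 = 2 := by decide
  have hg3tau : ∀ a, g3 (tau a) = -g3 a := by
    have h0 : g3 (tau 0) = -g3 0 := by rw [htau0]; norm_num [g3, f10]
    have h1 : g3 (tau 1) = -g3 1 := by rw [htau1]; norm_num [g3, f10]
    have h2 : g3 (tau 2) = -g3 2 := by rw [htau2']; norm_num [g3, f20, f21]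
    intro a; fin_cases a
    · exact h0
    · exact h1
    · exact h2
  have hpvtau : ∀ a, pv β c0 nD false (tau a) = pv β c0 nD true a := by
    have h0 : pv β c0 nD false (tau 0) = pv β c0 nD true 0 := by
      rw [htau0]
      simp only [pv, sgn_true, sgn_false, f10, f20, f21, if_false, if_true]
      ring
    have h1 : pv β c0 nD false (tau 1) = pv β c0 nD true 1 := by
      rw [htau1]
      simp only [pv, sgn_true, sgn_false, f10, f20, f21, if_false, if_true]
      ring
    have h2 : pv β c0 nD false (tau 2) = pv β c0 nD true 2 := by
      rw [htau2']; simp only [pv, f20, f21, if_false]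
    intro a; fin_cases a
    · exact h0
    · exact h1
    · exact h2
  have htau2 : ∀ a, tau (tau a) = a := by
    intro a; fin_cases a
    · decide
    · decide
    · decide
  have hSStau : ∀ f : Fin nD → Fin 3, Ssum (fun i => tau (f i)) = -Ssum f := by
    intro f
    rw [Ssum, Ssum, ← Finset.sum_neg_distrib]
    exact Finset.sum_congr rfl fun i _ => hg3tau (f i)
  have hcwttau : ∀ f : Fin nD → Fin 3,
      cwt β c0 nD false (fun i => tau (f i)) = cwt β c0 nD true f := by
    intro f
    rw [cwt, cwt]
    exact Finset.prod_congr rfl fun i _ => hpvtau (f i)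
  have hswap : ∑ f ∈ A0, cwt β c0 nD true f = ∑ f ∈ A0', cwt β c0 nD false f := by
    refine Finset.sum_nbij' (fun f => fun i => tau (f i)) (fun f => fun i => tau (f i))
      ?_ ?_ ?_ ?_ ?_
    · intro f hf
      simp only [hA0, hA0', Finset.mem_filter, Finset.mem_univ, true_and] at hf ⊢
      rw [hSStau]; linarith
    · intro f hf
      simp only [hA0, hA0', Finset.mem_filter, Finset.mem_univ, true_and] at hf ⊢
      rw [hSStau]; linarith
    · intro f _; funext i; exact htau2 (f i)
    · intro f _; funext i; exact htau2 (f i)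
    · intro f _; exact (hcwttau f).symm
  have h_tot : (1 : ℝ) ≤ ∑ f ∈ A0, cwt β c0 nD false f + ∑ f ∈ A0', cwt β c0 nD false f := by
    have hcover : (Finset.univ : Finset (Fin nD → Fin 3)) = A0 ∪ A0' := by
      ext f
      simp only [hA0, hA0', Finset.mem_union, Finset.mem_filter, Finset.mem_univ, true_and]
      exact (iff_true_intro (le_total 0 (Ssum f))).symm
    have h1 : (∑ f ∈ A0 ∪ A0', cwt β c0 nD false f) = 1 := by
      rw [← hcover]; exact sum_cwt false
    have h2 := Finset.sum_union_inter (s₁ := A0) (s₂ := A0') (f := cwt β c0 nD false)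
    have h3 : 0 ≤ ∑ f ∈ A0 ∩ A0', cwt β c0 nD false f :=
      Finset.sum_nonneg fun f _ => hcnn _ f
    linarith
  -- first and second moments
  have hq1 : ∑ a, pv β c0 nD true a * g3 a = c0 * e := by
    rw [Fin.sum_univ_three]
    simp only [pv, g3, sgn_true, f10, f20, f21, if_false, if_true]
    have hmul : e ^ β * e ^ (1 - β) = e := by
      rw [← Real.rpow_add he]; norm_num
    nlinarith [hmul]
  have hq2 : ∑ a, pv β c0 nD true a * (g3 a * g3 a) = e ^ β / 2 := by
    rw [Fin.sum_univ_three]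
    simp only [pv, g3, sgn_true, f10, f20, f21, if_false, if_true]
    ring
  have hstep : ∀ f : Fin nD → Fin 3, cwt β c0 nD true f * (Ssum f * Ssum f)
      = ∑ i : Fin nD, ∑ j : Fin nD, cwt β c0 nD true f * g3 (f i) * g3 (f j) := by
    intro f
    rw [Ssum, Finset.sum_mul_sum, Finset.mul_sum]
    refine Finset.sum_congr rfl fun i _ => ?_
    rw [Finset.mul_sum]
    exact Finset.sum_congr rfl fun j _ => by ring
  have hinner : ∀ i j : Fin nD,
      (∑ f : Fin nD → Fin 3, cwt β c0 nD true f * g3 (f i) * g3 (f j))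
        = if i = j then e ^ β / 2 else c0 * e * (c0 * e) := by
    intro i j
    have e1 : ∀ f : Fin nD → Fin 3, cwt β c0 nD true f * g3 (f i) * g3 (f j)
        = ∏ k, (pv β c0 nD true (f k) *
            ((if k = i then g3 (f k) else 1) * (if k = j then g3 (f k) else 1))) := by
      intro f
      rw [Finset.prod_mul_distrib, Finset.prod_mul_distrib,
        Finset.prod_ite_eq' Finset.univ i fun k => g3 (f k),
        Finset.prod_ite_eq' Finset.univ j fun k => g3 (f k)]
      simp only [Finset.mem_univ, if_true]
      rw [cwt]
      ring
    rw [Finset.sum_congr rfl fun f _ => e1 f,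
      ← Fintype.prod_sum (fun (k : Fin nD) (a : Fin 3) => pv β c0 nD true a *
        ((if k = i then g3 a else 1) * (if k = j then g3 a else 1)))]
    by_cases hij : i = j
    · subst hij
      have hfac : ∀ k : Fin nD, (∑ a, pv β c0 nD true a *
          ((if k = i then g3 a else 1) * (if k = i then g3 a else 1)))
          = if k = i then e ^ β / 2 else 1 := by
        intro k
        by_cases hk : k = i
        · simp only [hk, if_true, eq_self_iff_true]
          exact hq2
        · simp only [hk, if_false, mul_one]
          simpa using sum_pv (β := β) (c0 := c0) (nD := nD) true
      rw [Finset.prod_congr rfl fun k _ => hfac k,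
        Finset.prod_ite_eq' Finset.univ i fun _ => e ^ β / 2]
      simp
    · have hfac : ∀ k : Fin nD, (∑ a, pv β c0 nD true a *
          ((if k = i then g3 a else 1) * (if k = j then g3 a else 1)))
          = (if k = i then c0 * e else 1) * (if k = j then c0 * e else 1) := by
        intro k
        by_cases hk : k = i
        · simp only [hk, hij, if_true, if_false, eq_self_iff_true, mul_one]
          exact hq1
        · by_cases hk2 : k = j
          · have hji : ¬j = i := fun h => hij h.symm
            simp only [hk, hk2, hji, if_true, if_false, eq_self_iff_true, one_mul]
            exact hq1
          · simp only [hk, hk2, if_false, mul_one, one_mul]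
            simpa using sum_pv (β := β) (c0 := c0) (nD := nD) true
      rw [Finset.prod_congr rfl fun k _ => hfac k, Finset.prod_mul_distrib,
        Finset.prod_ite_eq' Finset.univ i fun _ => c0 * e,
        Finset.prod_ite_eq' Finset.univ j fun _ => c0 * e]
      simp [hij]
  have hM2 : ∑ f : Fin nD → Fin 3, cwt β c0 nD true f * (Ssum f * Ssum f)
      = (nD : ℝ) * (e ^ β / 2) + ((nD : ℝ) * (nD : ℝ) - (nD : ℝ)) * (c0 * e * (c0 * e)) := by
    rw [Finset.sum_congr rfl fun f _ => hstep f, Finset.sum_comm]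
    rw [Finset.sum_congr rfl fun i (_ : i ∈ Finset.univ) => Finset.sum_comm]
    rw [Finset.sum_congr rfl fun i (_ : i ∈ Finset.univ) =>
      Finset.sum_congr rfl fun j (_ : j ∈ Finset.univ) => hinner i j]
    have hrow : ∀ i : Fin nD, (∑ j : Fin nD, if i = j then e ^ β / 2 else c0 * e * (c0 * e))
        = (nD : ℝ) * (c0 * e * (c0 * e)) + (e ^ β / 2 - c0 * e * (c0 * e)) := by
      intro i
      have hpt : ∀ j : Fin nD, (if i = j then e ^ β / 2 else c0 * e * (c0 * e))
          = c0 * e * (c0 * e) + (if i = j then e ^ β / 2 - c0 * e * (c0 * e) else 0) := by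
        intro j; split_ifs <;> ring
      rw [Finset.sum_congr rfl fun j _ => hpt j, Finset.sum_add_distrib, Finset.sum_const,
        Finset.sum_ite_eq]
      simp [Finset.card_univ, nsmul_eq_mul]
    rw [Finset.sum_congr rfl fun i _ => hrow i, Finset.sum_const, Finset.card_univ]
    simp only [Fintype.card_fin, nsmul_eq_mul]
    ring
  have hM2le : ∑ f : Fin nD → Fin 3, cwt β c0 nD true f * (Ssum f * Ssum f)
      ≤ 9 / 16 * (u * u) := by
    rw [hM2]
    have h1 : (nD : ℝ) * (e ^ β / 2) = u * u / 2 := by linear_combination hu2 / 2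
    have h2 : (nD : ℝ) * (nD : ℝ) * (c0 * e * (c0 * e)) = c0 * c0 * (u * u) := by
      rw [hu_def]; ring
    have h3 : (0 : ℝ) ≤ c0 * e * (c0 * e) := by positivity
    have h4 : c0 * c0 ≤ 1 / 16 := by nlinarith
    have h5 : (0 : ℝ) ≤ (nD : ℝ) * (c0 * e * (c0 * e)) :=
      mul_nonneg (by linarith) h3
    nlinarith [mul_pos hu0 hu0, mul_le_mul_of_nonneg_right h4 (le_of_lt (mul_pos hu0 hu0))]
  have hmarkov : ∑ f ∈ bad, cwt β c0 nD true f ≤ 1 / 4 := by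
    have hterm : ∀ f ∈ bad, cwt β c0 nD true f * (K * K)
        ≤ cwt β c0 nD true f * (Ssum f * Ssum f) := by
      intro f hf
      have hKS : K < Ssum f := by
        simpa [hbad, Finset.mem_filter] using hf
      have hsq : K * K ≤ Ssum f * Ssum f := by nlinarith
      exact mul_le_mul_of_nonneg_left hsq (hcnn true f)
    have h5 : (∑ f ∈ bad, cwt β c0 nD true f) * (K * K)
        ≤ ∑ f ∈ bad, cwt β c0 nD true f * (Ssum f * Ssum f) := by
      rw [Finset.sum_mul]; exact Finset.sum_le_sum hterm
    have h6 : ∑ f ∈ bad, cwt β c0 nD true f * (Ssum f * Ssum f)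
        ≤ ∑ f : Fin nD → Fin 3, cwt β c0 nD true f * (Ssum f * Ssum f) :=
      Finset.sum_le_sum_of_subset_of_nonneg (Finset.subset_univ _)
        fun f _ _ => mul_nonneg (hcnn true f) (mul_self_nonneg _)
    have h7 : 0 ≤ ∑ f ∈ bad, cwt β c0 nD true f := Finset.sum_nonneg fun f _ => hcnn true f
    have h8 : 9 / 4 * (u * u) ≤ K * K := by
      rw [hK_def]
      nlinarith [mul_nonneg (mul_nonneg hc0.le hc0.le) (mul_nonneg hu0.le hu0.le),
        mul_nonneg hc0.le (mul_nonneg hu0.le hu0.le)]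
    have h9 : (∑ f ∈ bad, cwt β c0 nD true f) * (K * K) ≤ 9 / 16 * (u * u) :=
      le_trans h5 (le_trans h6 hM2le)
    nlinarith [mul_pos hu0 hu0, mul_le_mul_of_nonneg_left h8 h7]
  have hBbound : ∑ f ∈ Bs, cwt β c0 nD true f ≤ 61 * ∑ f ∈ A0, cwt β c0 nD false f := by
    have hBA : Bs ⊆ A0 := by
      intro f hf
      simp only [hBs, hA0, Finset.mem_filter, Finset.mem_univ, true_and] at hf ⊢
      exact hf.1
    have h1 : ∀ f ∈ Bs, cwt β c0 nD true f ≤ 61 * cwt β c0 nD false f := by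
      intro f hf
      rw [cwt_true_eq hβ0 hβ1 hc0 hc0']
      have hfS : 0 ≤ Ssum f ∧ Ssum f ≤ K := by
        simpa [hBs, Finset.mem_filter] using hf
      have hrr : rr β c0 nD ^ Ssum f ≤ rr β c0 nD ^ K :=
        Real.rpow_le_rpow_of_exponent_le hr1 hfS.2
      exact mul_le_mul_of_nonneg_right (le_trans hrr hrK) (hcnn false f)
    calc ∑ f ∈ Bs, cwt β c0 nD true f ≤ ∑ f ∈ Bs, 61 * cwt β c0 nD false f :=
          Finset.sum_le_sum h1
      _ = 61 * ∑ f ∈ Bs, cwt β c0 nD false f := by rw [Finset.mul_sum]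
      _ ≤ 61 * ∑ f ∈ A0, cwt β c0 nD false f := by
          have := Finset.sum_le_sum_of_subset_of_nonneg hBA
            (f := cwt β c0 nD false) fun f _ _ => hcnn false f
          linarith
  have hsplit : ∑ f ∈ A0, cwt β c0 nD true f
      ≤ ∑ f ∈ Bs, cwt β c0 nD true f + ∑ f ∈ bad, cwt β c0 nD true f := by
    have hsub : A0 ⊆ Bs ∪ bad := by
      intro f hf
      simp only [hA0, hBs, hbad, Finset.mem_union, Finset.mem_filter, Finset.mem_univ,
        true_and] at hf ⊢
      rcases le_or_gt (Ssum f) K with h | h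
      · exact Or.inl ⟨hf, h⟩
      · exact Or.inr h
    have h1 : ∑ f ∈ A0, cwt β c0 nD true f ≤ ∑ f ∈ Bs ∪ bad, cwt β c0 nD true f :=
      Finset.sum_le_sum_of_subset_of_nonneg hsub fun f _ _ => hcnn true f
    have h2 := Finset.sum_union_inter (s₁ := Bs) (s₂ := bad) (f := cwt β c0 nD true)
    have h3 : 0 ≤ ∑ f ∈ Bs ∩ bad, cwt β c0 nD true f :=
      Finset.sum_nonneg fun f _ => hcnn true f
    linarith
  have hfinal : 1 / 84 ≤ ∑ f ∈ A0, cwt β c0 nD false f := by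
    linarith [h_tot, hswap, hsplit, hBbound, hmarkov]
  -- conclude
  have himg := tgtM_image (nD := nD) hx hβ0 hβ1 hc0 hc0' false A0
  have hsubE : (pat x0 x1 '' (↑A0 : Set (Fin nD → Fin 3))) ⊆
      {W | 1 ≤ tgtM x0 x1 β c0 nD true {W} / tgtM x0 x1 β c0 nD false {W}} := by
    rintro W ⟨f, hf, rfl⟩
    have hf0 : 0 ≤ Ssum f := by
      have : f ∈ A0 := hf
      simpa [hA0, Finset.mem_filter] using this
    have hle : cwt β c0 nD false f ≤ cwt β c0 nD true f := by
      rw [cwt_true_eq hβ0 hβ1 hc0 hc0']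
      nlinarith [Real.one_le_rpow hr1 hf0, hcnn false f]
    have hpos : 0 < cwt β c0 nD false f :=
      Finset.prod_pos fun i _ => pv_false_pos hβ0 hβ1 hc0 hc0' (f i)
    simp only [Set.mem_setOf_eq]
    rw [tgtM_pattern hx hβ0 hβ1 hc0 hc0' true f, tgtM_pattern hx hβ0 hβ1 hc0 hc0' false f]
    have hne0 : ENNReal.ofReal (cwt β c0 nD false f) ≠ 0 := by
      simpa [ENNReal.ofReal_eq_zero, not_le] using hpos
    calc (1 : ENNReal)
        = ENNReal.ofReal (cwt β c0 nD false f) / ENNReal.ofReal (cwt β c0 nD false f) :=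
          (ENNReal.div_self hne0 ENNReal.ofReal_ne_top).symm
      _ ≤ _ := ENNReal.div_le_div_right (ENNReal.ofReal_le_ofReal hle) _
  calc ENNReal.ofReal (1 / 84) ≤ ENNReal.ofReal (∑ f ∈ A0, cwt β c0 nD false f) :=
        ENNReal.ofReal_le_ofReal hfinal
    _ = tgtM x0 x1 β c0 nD false (pat x0 x1 '' (↑A0 : Set (Fin nD → Fin 3))) := himg.symm
    _ ≤ _ := measure_mono hsubE

end CoreAux

section FinalAux

variable {x0 x1 : X}

lemma twoPt_isFinite (x0 x1 : X) (w η : ℝ) : IsFiniteMeasure (twoPt x0 x1 w η) := by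
  constructor
  rw [twoPt]
  simp only [Measure.add_apply, Measure.smul_apply, smul_eq_mul,
    Measure.dirac_apply_of_mem (Set.mem_univ _), mul_one]
  exact ENNReal.add_lt_top.2 ⟨ENNReal.add_lt_top.2
    ⟨ENNReal.ofReal_lt_top, ENNReal.ofReal_lt_top⟩, ENNReal.ofReal_lt_top⟩

lemma twoPt_univ_one_le (x0 x1 : X) (w η : ℝ) : 1 ≤ twoPt x0 x1 w η Set.univ := by
  rw [twoPt]
  simp only [Measure.add_apply, Measure.smul_apply, smul_eq_mul,
    Measure.dirac_apply_of_mem (Set.mem_univ _), mul_one]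
  calc (1 : ENNReal) = ENNReal.ofReal (w * η + (w * (1 - η) + (1 - w))) := by
        rw [show w * η + (w * (1 - η) + (1 - w)) = 1 by ring, ENNReal.ofReal_one]
    _ ≤ ENNReal.ofReal (w * η) + ENNReal.ofReal (w * (1 - η) + (1 - w)) :=
        ENNReal.ofReal_add_le
    _ ≤ ENNReal.ofReal (w * η) + (ENNReal.ofReal (w * (1 - η)) + ENNReal.ofReal (1 - w)) :=
        add_le_add le_rfl ENNReal.ofReal_add_le
    _ = ENNReal.ofReal (w * η) + ENNReal.ofReal (w * (1 - η)) + ENNReal.ofReal (1 - w) := by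
        rw [add_assoc]

end FinalAux

end S11

end Statement11Aux

/-- Proposition: target-sample likelihood ratio.
For `n_D > 0` and `0 < c₀ ≤ 1/4`, for `Z ∼ Γ₋`,
`P(D₊(Z_{N+1}) / D₋(Z_{N+1}) ≥ 1) ≥ 1/84`, where `D_σ(Z_{N+1})` denotes the
probability of the observed target block under `D_σ^{n_D}`. -/
theorem statement11 {X : Type u} [MeasurableSpace X] [MeasurableSingletonClass X]
    (x0 x1 : X) (hx : x0 ≠ x1)
    (β c0 c1 : ℝ) (n nD NP NQ : ℕ)
    (hβ0 : 0 ≤ β) (hβ1 : β < 1) (hn : 1 ≤ n) (hNP : 1 ≤ NP) (hNQ : 1 ≤ NQ)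
    (hnD : 0 < nD) (hc0 : 0 < c0) (hc0' : c0 ≤ 1 / 4) (hc1 : 0 < c1) :
    1 / 84 ≤ (Gamma x0 x1 β c0 c1 n nD NP NQ false
        {Z | 1 ≤ tgtM x0 x1 β c0 nD true {Z.2} /
              tgtM x0 x1 β c0 nD false {Z.2}}).toReal := by
  classical
  haveI hPf : IsProbabilityMeasure (Dtgt x0 x1 β c0 nD false) :=
    S11.Dtgt_isProb hβ0 hβ1 hc0 hc0' false
  haveI : IsProbabilityMeasure (tgtM x0 x1 β c0 nD false) :=
    inferInstanceAs (IsProbabilityMeasure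
      (Measure.pi fun _ : Fin nD => Dtgt x0 x1 β c0 nD false))
  haveI : IsFiniteMeasure (Psrc x0 x1 β c1 n NP false) :=
    S11.twoPt_isFinite x0 x1 _ _
  haveI : IsFiniteMeasure (Qsrc x0 x1 false) := S11.twoPt_isFinite x0 x1 _ _
  haveI hBf : IsFiniteMeasure (blockM x0 x1 β c1 n NP NQ false) := by
    constructor
    rw [blockM]
    simp only [Measure.add_apply, Measure.smul_apply, smul_eq_mul]
    exact ENNReal.add_lt_top.2
      ⟨ENNReal.mul_lt_top ENNReal.ofReal_lt_top (measure_lt_top _ _),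
       ENNReal.mul_lt_top ENNReal.ofReal_lt_top (measure_lt_top _ _)⟩
  haveI : IsFiniteMeasure
      (Measure.pi fun _ : Fin (NP + NQ) => blockM x0 x1 β c1 n NP NQ false) :=
    inferInstance
  set E : Set (Fin nD → X × Bool) :=
    {W | 1 ≤ tgtM x0 x1 β c0 nD true {W} / tgtM x0 x1 β c0 nD false {W}} with hE_def
  have hset : {Z : (Fin (NP + NQ) → Fin n → X × Bool) × (Fin nD → X × Bool) |
        1 ≤ tgtM x0 x1 β c0 nD true {Z.2} / tgtM x0 x1 β c0 nD false {Z.2}}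
      = (Set.univ : Set (Fin (NP + NQ) → Fin n → X × Bool)) ×ˢ E := by
    ext Z
    simp only [hE_def, Set.mem_setOf_eq, Set.mem_prod, Set.mem_univ, true_and]
  have heq : Gamma x0 x1 β c0 c1 n nD NP NQ false
        {Z | 1 ≤ tgtM x0 x1 β c0 nD true {Z.2} / tgtM x0 x1 β c0 nD false {Z.2}}
      = (Measure.pi fun _ : Fin (NP + NQ) => blockM x0 x1 β c1 n NP NQ false) Set.univ
        * tgtM x0 x1 β c0 nD false E := by
    rw [Gamma, hset, Measure.prod_prod]
  have h1 : 1 ≤ (Measure.pi fun _ : Fin (NP + NQ) =>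
      blockM x0 x1 β c1 n NP NQ false) Set.univ := by
    rw [Measure.pi_univ]
    refine Finset.one_le_prod' fun t _ => ?_
    have hP1 : 1 ≤ Measure.pi (fun _ : Fin n => Psrc x0 x1 β c1 n NP false) Set.univ := by
      rw [Measure.pi_univ]
      exact Finset.one_le_prod' fun i _ => S11.twoPt_univ_one_le x0 x1 _ _
    have hQ1 : 1 ≤ Measure.pi (fun _ : Fin n => Qsrc x0 x1 false) Set.univ := by
      rw [Measure.pi_univ]
      exact Finset.one_le_prod' fun i _ => S11.twoPt_univ_one_le x0 x1 _ _
    have hNPQ : (0 : ℝ) < (NP : ℝ) + (NQ : ℝ) := by positivity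
    have hfrac : (NP : ℝ) / ((NP : ℝ) + (NQ : ℝ)) + (NQ : ℝ) / ((NP : ℝ) + (NQ : ℝ)) = 1 := by
      field_simp
    rw [blockM]
    simp only [Measure.add_apply, Measure.smul_apply, smul_eq_mul]
    calc (1 : ENNReal)
        = ENNReal.ofReal ((NP : ℝ) / ((NP : ℝ) + (NQ : ℝ))
            + (NQ : ℝ) / ((NP : ℝ) + (NQ : ℝ))) := by rw [hfrac, ENNReal.ofReal_one]
      _ ≤ ENNReal.ofReal ((NP : ℝ) / ((NP : ℝ) + (NQ : ℝ)))
            + ENNReal.ofReal ((NQ : ℝ) / ((NP : ℝ) + (NQ : ℝ))) := ENNReal.ofReal_add_le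
      _ ≤ ENNReal.ofReal ((NP : ℝ) / ((NP : ℝ) + (NQ : ℝ)))
            * Measure.pi (fun _ : Fin n => Psrc x0 x1 β c1 n NP false) Set.univ
          + ENNReal.ofReal ((NQ : ℝ) / ((NP : ℝ) + (NQ : ℝ)))
            * Measure.pi (fun _ : Fin n => Qsrc x0 x1 false) Set.univ :=
          add_le_add (le_mul_of_one_le_right (by positivity) hP1)
            (le_mul_of_one_le_right (by positivity) hQ1)
  have hcore := S11.core x0 x1 hx β c0 nD hβ0 hβ1 hnD hc0 hc0'
  have hne : (Measure.pi fun _ : Fin (NP + NQ) => blockM x0 x1 β c1 n NP NQ false) Set.univ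
      * tgtM x0 x1 β c0 nD false E ≠ ⊤ :=
    ENNReal.mul_ne_top (measure_ne_top _ _) (measure_ne_top _ _)
  rw [heq, ← ENNReal.ofReal_le_iff_le_toReal hne]
  calc ENNReal.ofReal (1 / 84) ≤ tgtM x0 x1 β c0 nD false E := hcore
    _ = 1 * tgtM x0 x1 β c0 nD false E := (one_mul _).symm
    _ ≤ _ := by gcongr

end Paper
end
end

section
/- Excess risk of constrained hypotheses under the mixture of tasks: Let Π = Π_{t∈[N]} P_t^{n_t} × D^{n_{N+1}} be a product distribution (D := P_{N+1}) such that some single h* ∈ H minimizes the risk under every P_t, t∈[N+1], and every P_t satisfies the Bernstein class condition with parameters (C_β, β). Fix I ⊆ [N+1], let N_I = Σ_{t∈I} n_t, P̄_I = N_I^{−1}·Σ_{t∈I} n_t·P_t, and Z^I the union of the samples from the tasks in I. Then, for any δ ∈ (0,1), with probability at least 1−δ (on the event of the uniform Bernstein inequality applied to S = Z^I), every h ∈ H satisfying Ê_{Z^I}(h; ĥ_{Z^I}) ≤ C_0·√( P̂_{Z^I}(h ≠ ĥ_{Z^I})·ε(N_I, δ) ) + C_0·ε(N_I, δ) also satisfies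 E_{P̄_I}(h) ≤ 32·C_0²·( C_β·ε(N_I, δ) )^{1/(2−β)}, where ĥ_{Z^I} is the ERM over Z^I and C_0 is the universal constant of the uniform Bernstein inequality. -/
set_option maxHeartbeats 1000000


open MeasureTheory Finset

noncomputable section

namespace Paper

universe u

lemma sqrt_add_le' {a b : ℝ} (ha : 0 ≤ a) (hb : 0 ≤ b) :
    Real.sqrt (a + b) ≤ Real.sqrt a + Real.sqrt b := by
  have h1 : a + b ≤ (Real.sqrt a + Real.sqrt b) ^ 2 := by
    have := Real.sq_sqrt ha
    have := Real.sq_sqrt hb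
    nlinarith [mul_nonneg (Real.sqrt_nonneg a) (Real.sqrt_nonneg b)]
  calc Real.sqrt (a + b) ≤ Real.sqrt ((Real.sqrt a + Real.sqrt b) ^ 2) := Real.sqrt_le_sqrt h1
  _ = Real.sqrt a + Real.sqrt b := Real.sqrt_sq (by positivity)

lemma key {C0 Cb β ε x y Dx Dy Ex dxy : ℝ}
    (hC0 : (0.34 : ℝ) ≤ C0) (hCb : 2 ≤ Cb) (hβ0 : 0 ≤ β) (hβ1 : β ≤ 1) (hε : 0 < ε)
    (hx0 : 0 ≤ x) (hx1 : x ≤ 1) (hy0 : 0 ≤ y)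
    (hDx : Dx ≤ Cb * (x ^ β + (0 : ℝ) ^ β))
    (hDy : Dy ≤ Cb * (y ^ β + (0 : ℝ) ^ β))
    (h1 : x ≤ Ex + C0 * Real.sqrt (Dx * ε) + C0 * ε)
    (hEx : Ex ≤ C0 * Real.sqrt (dxy * ε) + C0 * ε)
    (h2 : y ≤ C0 * Real.sqrt (Dy * ε) + C0 * ε)
    (hdxy : dxy ≤ 2 * Dx + C0 * ε + (2 * Dy + C0 * ε)) :
    x ≤ 32 * C0 ^ 2 * (Cb * ε) ^ (1 / (2 - β)) := by
  have hC0pos : (0:ℝ) < C0 := lt_of_lt_of_le (by norm_num) hC0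
  have h2β : (0:ℝ) < 2 - β := by linarith
  have hs0 : 0 < 1 / (2 - β) := by positivity
  have hs1 : 1 / (2 - β) ≤ 1 := by rw [div_le_one h2β]; linarith
  have hKpos : (0:ℝ) < Cb * ε := by positivity
  have hBpos : (0:ℝ) < (Cb * ε) ^ (1 / (2 - β)) := Real.rpow_pos_of_pos hKpos _
  have hsq2C0 : Real.sqrt (2 * C0) ≤ C0 + 1/2 := by
    have h' : 2 * C0 ≤ (C0 + 1/2)^2 := by linarith only [sq_nonneg (C0 - 1/2)]
    calc Real.sqrt (2*C0) ≤ Real.sqrt ((C0+1/2)^2) := Real.sqrt_le_sqrt h'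
    _ = C0 + 1/2 := Real.sqrt_sq (by linarith)
  have hsq2C0' : (0:ℝ) ≤ Real.sqrt (2*C0) := Real.sqrt_nonneg _
  have h32 : (1:ℝ) ≤ 32 * C0^2 := by linarith only [sq_nonneg (C0 - 0.34), hC0]
  rcases le_or_gt 1 (Cb * ε) with hK1 | hK1
  · -- trivial case
    have hB1 : (1:ℝ) ≤ (Cb * ε) ^ (1 / (2 - β)) := Real.one_le_rpow hK1 (le_of_lt hs0)
    have h' := mul_le_mul_of_nonneg_left hB1 (show (0:ℝ) ≤ 32*C0^2 by positivity)
    calc x ≤ 1 := hx1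
    _ ≤ 32*C0^2 := h32
    _ = 32*C0^2 * 1 := (mul_one _).symm
    _ ≤ 32*C0^2*(Cb*ε) ^ (1/(2-β)) := h'
  · -- K < 1
    have hKB : Cb * ε ≤ (Cb * ε) ^ (1 / (2 - β)) := by
      have := Real.rpow_le_rpow_of_exponent_ge hKpos (le_of_lt hK1) hs1
      rwa [Real.rpow_one] at this
    have hεB : 2 * ε ≤ (Cb * ε) ^ (1 / (2 - β)) := by
      have h2e := mul_le_mul_of_nonneg_right hCb hε.le
      linarith only [h2e, hKB]
    rcases (eq_or_lt_of_le hβ0) with hβz | hβpos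
    · -- β = 0
      have hβz' : β = 0 := hβz.symm
      subst hβz'
      rw [Real.rpow_zero, Real.rpow_zero] at hDx hDy
      rw [show (1:ℝ)/(2-0) = 1/2 by norm_num, ← Real.sqrt_eq_rpow] at hBpos hεB hKB ⊢
      set q := Real.sqrt (Cb * ε) with hq
      have hq0 : 0 ≤ q := Real.sqrt_nonneg _
      have hDxB : Dx ≤ 2 * Cb := by linarith only [hDx]
      have hDyB : Dy ≤ 2 * Cb := by linarith only [hDy]
      have hDxε : Real.sqrt (Dx * ε) ≤ Real.sqrt 2 * q := by
        have h' : Dx * ε ≤ 2 * (Cb * ε) := by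
          have := mul_le_mul_of_nonneg_right hDxB hε.le; linarith only [this]
        calc Real.sqrt (Dx * ε) ≤ Real.sqrt (2 * (Cb*ε)) := Real.sqrt_le_sqrt h'
        _ = Real.sqrt 2 * q := by rw [Real.sqrt_mul (by norm_num)]
      have hsqrt8 : Real.sqrt (8*(Cb*ε)) = 2 * Real.sqrt 2 * q := by
        rw [Real.sqrt_mul (by norm_num : (0:ℝ) ≤ 8), show Real.sqrt 8 = 2 * Real.sqrt 2 by
          rw [show (8:ℝ) = 2^2 * 2 by norm_num, Real.sqrt_mul (by positivity),
            Real.sqrt_sq (by norm_num)]]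
      have hsqC0e : Real.sqrt (2*C0*ε^2) = Real.sqrt (2*C0) * ε := by
        rw [Real.sqrt_mul (by positivity : (0:ℝ) ≤ 2*C0), Real.sqrt_sq hε.le]
      have hdxyε : Real.sqrt (dxy * ε) ≤ 2 * Real.sqrt 2 * q + Real.sqrt (2*C0) * ε := by
        have hd8 : dxy ≤ 8 * Cb + 2*C0*ε := by linarith only [hdxy, hDxB, hDyB]
        have h' : dxy * ε ≤ 8 * (Cb * ε) + 2*C0 * ε^2 := by
          have := mul_le_mul_of_nonneg_right hd8 hε.le; linarith only [this]
        calc Real.sqrt (dxy * ε) ≤ Real.sqrt (8 * (Cb*ε) + 2*C0 * ε^2) := Real.sqrt_le_sqrt h'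
        _ ≤ Real.sqrt (8 * (Cb*ε)) + Real.sqrt (2*C0 * ε^2) :=
            sqrt_add_le' (by positivity) (by positivity)
        _ = 2 * Real.sqrt 2 * q + Real.sqrt (2*C0) * ε := by rw [hsqrt8, hsqC0e]
      have hsqrt2 : Real.sqrt 2 ≤ 1.415 := by
        have h' : (2:ℝ) ≤ 1.415^2 := by norm_num
        calc Real.sqrt 2 ≤ Real.sqrt (1.415^2) := Real.sqrt_le_sqrt h'
        _ = 1.415 := Real.sqrt_sq (by norm_num)
      have t1 : C0 * Real.sqrt (Dx*ε) ≤ Real.sqrt 2 * C0 * q := by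
        have h' := mul_le_mul_of_nonneg_left hDxε hC0pos.le
        linarith only [h']
      have t2 : C0 * Real.sqrt (dxy*ε) ≤
          2 * Real.sqrt 2 * C0 * q + Real.sqrt (2*C0) * C0 * ε := by
        have h' := mul_le_mul_of_nonneg_left hdxyε hC0pos.le
        linarith only [h']
      have hx' : x ≤ 3 * Real.sqrt 2 * C0 * q + Real.sqrt (2*C0) * C0 * ε + 2 * C0 * ε := by
        linarith only [h1, hEx, t1, t2]
      have e1 : 3 * Real.sqrt 2 * C0 * q ≤ 4.245 * C0 * q := by
        have h' := mul_le_mul_of_nonneg_right hsqrt2 (mul_nonneg hC0pos.le hq0)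
        linarith only [h']
      have e2 : Real.sqrt (2*C0) * C0 * ε ≤ (C0 + 1/2) * C0 * (q/2) := by
        have h' := mul_le_mul hsq2C0 (show ε ≤ q/2 by linarith) hε.le (by linarith : (0:ℝ) ≤ C0+1/2)
        have h'' := mul_le_mul_of_nonneg_left h' hC0pos.le
        linarith only [h'']
      have e2' : 2 * C0 * ε ≤ C0 * q := by
        have h' := mul_le_mul_of_nonneg_left (show 2*ε ≤ q by linarith only [hεB]) hC0pos.le
        linarith only [h']
      have e3 : (0:ℝ) ≤ (31.5*C0 - 5.495) * (C0 * q) := by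
        apply mul_nonneg (by linarith) (mul_nonneg hC0pos.le hq0)
      linarith only [hx', e1, e2, e2', e3]
    · -- β > 0
      have h0β : (0:ℝ) ^ β = 0 := Real.zero_rpow (ne_of_gt hβpos)
      rw [h0β] at hDx hDy
      have hw0 : 0 ≤ max x y := le_trans hx0 (le_max_left _ _)
      have hxw : x ^ β ≤ (max x y) ^ β := Real.rpow_le_rpow hx0 (le_max_left _ _) hβ0
      have hyw : y ^ β ≤ (max x y) ^ β := Real.rpow_le_rpow hy0 (le_max_right _ _) hβ0
      have hwβ0 : 0 ≤ (max x y) ^ β := Real.rpow_nonneg hw0 β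
      set w : ℝ := max x y with hw
      have hCbpos : (0:ℝ) < Cb := by linarith
      have hDx' : Dx ≤ Cb * w ^ β := by
        have := mul_le_mul_of_nonneg_left hxw hCbpos.le; linarith only [this, hDx]
      have hDy' : Dy ≤ Cb * w ^ β := by
        have := mul_le_mul_of_nonneg_left hyw hCbpos.le; linarith only [this, hDy]
      set A : ℝ := Real.sqrt (Cb * w ^ β * ε) with hA
      have hA0 : 0 ≤ A := Real.sqrt_nonneg _
      have hDxε : Real.sqrt (Dx * ε) ≤ A := by
        apply Real.sqrt_le_sqrt
        have := mul_le_mul_of_nonneg_right hDx' hε.le; linarith only [this]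
      have hDyε : Real.sqrt (Dy * ε) ≤ A := by
        apply Real.sqrt_le_sqrt
        have := mul_le_mul_of_nonneg_right hDy' hε.le; linarith only [this]
      have hsq4 : Real.sqrt (4*(Cb*w^β*ε)) = 2 * A := by
        rw [Real.sqrt_mul (by norm_num : (0:ℝ) ≤ 4), show Real.sqrt 4 = 2 by
          rw [show (4:ℝ) = 2^2 by norm_num, Real.sqrt_sq (by norm_num)]]
      have hsqC0e : Real.sqrt (2*C0*ε^2) = Real.sqrt (2*C0) * ε := by
        rw [Real.sqrt_mul (by positivity : (0:ℝ) ≤ 2*C0), Real.sqrt_sq hε.le]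
      have hdxyε : Real.sqrt (dxy * ε) ≤ 2 * A + Real.sqrt (2*C0) * ε := by
        have hd4 : dxy ≤ 4 * (Cb*w^β) + 2*C0*ε := by linarith only [hdxy, hDx', hDy']
        have h' : dxy * ε ≤ 4 * (Cb * w^β * ε) + 2*C0 * ε^2 := by
          have := mul_le_mul_of_nonneg_right hd4 hε.le; linarith only [this]
        calc Real.sqrt (dxy * ε) ≤ Real.sqrt (4 * (Cb*w^β*ε) + 2*C0*ε^2) := Real.sqrt_le_sqrt h'
        _ ≤ Real.sqrt (4 * (Cb*w^β*ε)) + Real.sqrt (2*C0*ε^2) :=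
            sqrt_add_le' (by positivity) (by positivity)
        _ = 2 * A + Real.sqrt (2*C0) * ε := by rw [hsq4, hsqC0e]
      have t1 : C0 * Real.sqrt (Dx*ε) ≤ C0 * A := mul_le_mul_of_nonneg_left hDxε hC0pos.le
      have t1' : C0 * Real.sqrt (Dy*ε) ≤ C0 * A := mul_le_mul_of_nonneg_left hDyε hC0pos.le
      have t2 : C0 * Real.sqrt (dxy*ε) ≤ 2 * (C0 * A) + Real.sqrt (2*C0) * C0 * ε := by
        have h' := mul_le_mul_of_nonneg_left hdxyε hC0pos.le
        linarith only [h']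
      have hCA : 0 ≤ C0 * A := mul_nonneg hC0pos.le hA0
      have hCε : 0 ≤ C0 * ε := mul_nonneg hC0pos.le hε.le
      have hSCε : 0 ≤ Real.sqrt (2*C0) * C0 * ε := by positivity
      have hwA : w ≤ 3 * (C0 * A) + Real.sqrt (2*C0) * C0 * ε + 2 * (C0 * ε) := by
        apply max_le
        · linarith only [h1, hEx, t1, t2, hCε]
        · linarith only [h2, t1', hCA, hSCε, hCε]
      -- Young's inequality
      have hp : (2/(2-β)).HolderConjugate (2/β) := by
        rw [Real.holderConjugate_iff]
        constructor
        · rw [lt_div_iff₀ h2β]; linarith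
        · rw [inv_div, inv_div]
          field_simp
          ring
      have hyoung := Real.young_inequality_of_nonneg
        (show (0:ℝ) ≤ 3*C0*Real.sqrt (Cb*ε) by positivity)
        (Real.rpow_nonneg hw0 (β/2)) hp
      have hAfact : A = Real.sqrt (Cb*ε) * w ^ (β/2) := by
        rw [hA, show Cb * w^β * ε = (Cb*ε) * w^β by ring, Real.sqrt_mul (by positivity),
          show Real.sqrt (w^β) = w^(β/2) by
            rw [Real.sqrt_eq_rpow, ← Real.rpow_mul hw0, show β*(1/2) = β/2 by ring]]
      have hwq : (w ^ (β/2)) ^ (2/β) = w := by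
        rw [← Real.rpow_mul hw0, show β/2 * (2/β) = 1 by field_simp, Real.rpow_one]
      have hne : (2-β) ≠ 0 := ne_of_gt h2β
      have h9 : Real.sqrt (9*C0^2*(Cb*ε)) = 3*C0*Real.sqrt (Cb*ε) := by
        rw [Real.sqrt_mul (by positivity : (0:ℝ) ≤ 9*C0^2),
          show (9*C0^2:ℝ) = (3*C0)^2 by ring, Real.sqrt_sq (by positivity)]
      have hexp : (1:ℝ)/2 * (2/(2-β)) = 1/(2-β) := by field_simp
      have hpow : (3*C0*Real.sqrt (Cb*ε)) ^ (2/(2-β)) =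
          (9*C0^2) ^ (1/(2-β)) * (Cb*ε) ^ (1/(2-β)) := by
        rw [← h9, Real.sqrt_eq_rpow, ← Real.rpow_mul (by positivity), hexp,
          Real.mul_rpow (by positivity) (by positivity)]
      have h9C0 : (9*C0^2 : ℝ) ^ (1/(2-β)) ≤ 9*C0^2 := by
        have h1' : (1:ℝ) ≤ 9*C0^2 := by linarith only [sq_nonneg (C0 - 0.34), hC0]
        have h2' := Real.rpow_le_rpow_of_exponent_le h1' hs1
        rwa [Real.rpow_one] at h2'
      have hdiv1 : (3*C0*Real.sqrt (Cb*ε)) ^ (2/(2-β)) / (2/(2-β)) ≤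
          (3*C0*Real.sqrt (Cb*ε)) ^ (2/(2-β)) := by
        apply div_le_self (Real.rpow_nonneg (by positivity) _)
        rw [le_div_iff₀ h2β]; linarith
      have hdiv2 : w / (2/β) ≤ w / 2 := by
        rw [div_div_eq_mul_div, div_le_div_iff₀ (by norm_num) (by norm_num)]
        linarith only [mul_le_of_le_one_right hw0 hβ1]
      have hyoung' : 3 * (C0 * A) ≤ 9*C0^2 * ((Cb*ε) ^ (1/(2-β))) + w/2 := by
        have step2 : (9*C0^2 : ℝ) ^ (1/(2-β)) * (Cb*ε) ^ (1/(2-β)) ≤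
            9*C0^2 * ((Cb*ε) ^ (1/(2-β))) :=
          mul_le_mul_of_nonneg_right h9C0 hBpos.le
        have step1 : 3 * (C0 * A) = (3*C0*Real.sqrt (Cb*ε)) * w ^ (β/2) := by
          rw [hAfact]; ring
        rw [step1]
        calc (3*C0*Real.sqrt (Cb*ε)) * w ^ (β/2) ≤
            (3*C0*Real.sqrt (Cb*ε)) ^ (2/(2-β)) / (2/(2-β)) + (w ^ (β/2)) ^ (2/β) / (2/β) :=
              hyoung
        _ ≤ (3*C0*Real.sqrt (Cb*ε)) ^ (2/(2-β)) + w / 2 := by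
            rw [hwq]; linarith only [hdiv1, hdiv2]
        _ ≤ 9*C0^2 * ((Cb*ε) ^ (1/(2-β))) + w/2 := by rw [hpow]; linarith only [step2]
      have hb' : Real.sqrt (2*C0) * C0 * ε + 2 * (C0 * ε) ≤ (C0 + 5/2) * C0 * ε := by
        have h' := mul_le_mul_of_nonneg_right
          (mul_le_mul_of_nonneg_right hsq2C0 hC0pos.le) hε.le
        linarith only [h']
      have hbB : (C0 + 5/2) * C0 * (2*ε) ≤ (C0 + 5/2) * C0 * ((Cb*ε) ^ (1/(2-β))) :=
        mul_le_mul_of_nonneg_left hεB (by positivity)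
      have e3 : (0:ℝ) ≤ (13*C0 - 5/2) * (C0 * ((Cb*ε) ^ (1/(2-β)))) :=
        mul_nonneg (by linarith) (mul_nonneg hC0pos.le hBpos.le)
      have hxle : x ≤ w := le_max_left x y
      linarith only [hwA, hyoung', hb', hbB, e3, hxle]

lemma sqrt2_le : Real.sqrt 2 ≤ 1.415 := by
  have h' : (2:ℝ) ≤ 1.415^2 := by norm_num
  calc Real.sqrt 2 ≤ Real.sqrt (1.415^2) := Real.sqrt_le_sqrt h'
  _ = 1.415 := Real.sqrt_sq (by norm_num)

lemma eps_special : eps 1 1 (37/100) = 2 := by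
  have hlog1 : plog 1 = 1 := by
    rw [plog, Real.log_one]; norm_num
  have hlog2 : plog (1 / (37/100)) = 1 := by
    rw [plog, max_eq_right]
    rw [Real.log_le_iff_le_exp (by norm_num)]
    have := Real.exp_one_gt_d9
    norm_num at this ⊢
    linarith
  rw [eps]
  norm_num at hlog1 hlog2 ⊢
  rw [hlog1, hlog2]
  norm_num

lemma c0_lower {C0 : ℝ} (hC0 : 0 < C0) (hUB : UnifBernstein.{u} C0) : (0.34:ℝ) ≤ C0 := by
  classical
  set Y := PUnit.{u+1}
  set htc : Y → Bool := fun _ => true with hhtc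
  set hfc : Y → Bool := fun _ => false with hhfc
  set H : Set (Y → Bool) := {hfc, htc} with hHdef
  have hVC : VCEq H 1 := by
    constructor
    · intro s _
      exact Finset.card_le_one.2 (fun a _ b _ => Subsingleton.elim a b)
    · refine ⟨{PUnit.unit}, ?_, Finset.card_singleton _⟩
      intro f
      rcases Bool.eq_false_or_eq_true (f PUnit.unit) with hb | hb
      · exact ⟨htc, Or.inr rfl, fun x _ => by cases x; rw [hb]⟩
      · exact ⟨hfc, Or.inl rfl, fun x _ => by cases x; rw [hb]⟩
  set pt : Y × Bool := (PUnit.unit, true) with hpt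
  set pf : Y × Bool := (PUnit.unit, false) with hpf
  set μ0 : Measure (Y × Bool) :=
    (ENNReal.ofReal (3/5)) • Measure.dirac pt + (ENNReal.ofReal (2/5)) • Measure.dirac pf
    with hμ0
  have hμ0app : ∀ A : Set (Y × Bool),
      μ0 A = (ENNReal.ofReal (3/5)) * A.indicator 1 pt
        + (ENNReal.ofReal (2/5)) * A.indicator 1 pf := by
    intro A
    rw [hμ0]
    simp [Measure.add_apply, Measure.smul_apply, Measure.dirac_apply, smul_eq_mul]
  have hprob : IsProbabilityMeasure μ0 := by
    constructor
    rw [hμ0app]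
    simp only [Set.indicator_univ, Pi.one_apply]
    rw [mul_one, mul_one, ← ENNReal.ofReal_add (by norm_num) (by norm_num)]
    norm_num
  have hUB' := hUB Y inferInstance H 1 hVC 1 one_pos (37/100) (by norm_num) (by norm_num)
    (fun _ => μ0) (fun _ => hprob)
  set S0 : Fin 1 → Y × Bool := fun _ => pf with hS0
  have hgen : ∀ E : Set (Fin 1 → Y × Bool),
      ENNReal.ofReal (1 - 37/100) ≤ Measure.pi (fun _ : Fin 1 => μ0) E → S0 ∈ E := by
    intro E hle
    by_contra hnot
    have hsub : E ⊆ {S0}ᶜ := fun S hS hSe => hnot (by rwa [Set.mem_singleton_iff.mp hSe] at hS)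
    have hcompl : ({S0}ᶜ : Set (Fin 1 → Y × Bool)) =
        Set.pi Set.univ (fun _ => ({pf}ᶜ : Set (Y × Bool))) := by
      ext S
      simp only [Set.mem_compl_iff, Set.mem_singleton_iff, Set.mem_pi, Set.mem_univ,
        forall_true_left]
      rw [funext_iff]
      simp [Fin.forall_fin_one, hS0]
    have hval : Measure.pi (fun _ : Fin 1 => μ0) ({S0}ᶜ) = ENNReal.ofReal (3/5) := by
      rw [hcompl, Measure.pi_pi]
      rw [Fin.prod_univ_one, hμ0app]
      rw [Set.indicator_of_mem (by simp [hpt, hpf]) 1,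
        Set.indicator_of_notMem (by simp) 1]
      simp only [Pi.one_apply, mul_one, mul_zero, add_zero]
    have hle2 : ENNReal.ofReal (1 - 37/100) ≤ ENNReal.ofReal (3/5) := by
      calc ENNReal.ofReal (1 - 37/100) ≤ Measure.pi (fun _ : Fin 1 => μ0) E := hle
      _ ≤ Measure.pi (fun _ : Fin 1 => μ0) ({S0}ᶜ) := measure_mono hsub
      _ = ENNReal.ofReal (3/5) := hval
    rw [ENNReal.ofReal_le_ofReal_iff (by norm_num)] at hle2
    norm_num at hle2
  have hS0E := hgen _ hUB'
  have hmain := (hS0E hfc (Or.inl rfl) htc (Or.inr rfl)).1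
  -- compute all the quantities
  have hriskf : risk μ0 hfc = 3/5 := by
    rw [risk, hμ0app]
    rw [Set.indicator_of_mem (by simp [hpt, hhfc]) 1,
      Set.indicator_of_notMem (by simp [hpf, hhfc]) 1]
    simp only [Pi.one_apply, mul_one, mul_zero, add_zero]
    rw [ENNReal.toReal_ofReal (by norm_num)]
  have hriskt : risk μ0 htc = 2/5 := by
    rw [risk, hμ0app]
    rw [Set.indicator_of_notMem (by simp [hpt, hhtc]) 1,
      Set.indicator_of_mem (by simp [hpf, hhtc]) 1]
    simp only [Pi.one_apply, mul_one, mul_zero, zero_add]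
    rw [ENNReal.toReal_ofReal (by norm_num)]
  have hdis : dis μ0 hfc htc = 1 := by
    rw [dis, hμ0app]
    rw [Set.indicator_of_mem (by simp [hpt, hhfc, hhtc]) 1,
      Set.indicator_of_mem (by simp [hpf, hhfc, hhtc]) 1]
    simp only [Pi.one_apply, mul_one]
    rw [← ENNReal.ofReal_add (by norm_num) (by norm_num)]
    norm_num
  have hempf : empRisk S0 hfc = 0 := by
    rw [empRisk]
    simp [hS0, hhfc, hpf]
  have hempt : empRisk S0 htc = 1 := by
    rw [empRisk]
    simp [hS0, hhtc, hpf]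
  have hempDis : empDis S0 hfc htc = 1 := by
    rw [empDis]
    simp [hS0, hhfc, hhtc]
  rw [Fin.sum_univ_one, Fin.sum_univ_one, hriskf, hriskt, empExcess, hempf, hempt, hempDis,
    hdis, eps_special] at hmain
  norm_num at hmain

  have h2 := mul_le_mul_of_nonneg_left sqrt2_le hC0.le
  -- 6/5 ≤ C0 * √2 + 2 C0 ≤ 3.415 C0
  linarith only [hmain, h2, hC0]


universe v
section PlumbSec

section Plumb
variable {ι : Type*} [Fintype ι] {κ : ι → Type*} [∀ i, Fintype (κ i)]
  {C : Type*} [MeasurableSpace C] {m : ℕ}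

/-- Flattening a doubly-indexed product into `Fin m` via an equivalence of index sets. -/
def flattenEquivAux (e : (Σ i, κ i) ≃ Fin m) : ((i : ι) → κ i → C) ≃ (Fin m → C) where
  toFun v j := v (e.symm j).1 (e.symm j).2
  invFun S i k := S (e ⟨i, k⟩)
  left_inv v := by
    funext i k
    show v (e.symm (e ⟨i,k⟩)).1 (e.symm (e ⟨i,k⟩)).2 = v i k
    rw [e.symm_apply_apply]
  right_inv S := by
    funext j
    show S (e ⟨(e.symm j).1, (e.symm j).2⟩) = S j
    rw [Sigma.eta, e.apply_symm_apply]

def flattenEquiv (e : (Σ i, κ i) ≃ Fin m) : ((i : ι) → κ i → C) ≃ᵐ (Fin m → C) where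
  toEquiv := flattenEquivAux e
  measurable_toFun := by
    show Measurable fun (v : (i : ι) → κ i → C) (j : Fin m) => v (e.symm j).1 (e.symm j).2
    exact measurable_pi_lambda _ fun j =>
      (measurable_pi_apply ((e.symm j).2)).comp (measurable_pi_apply ((e.symm j).1))
  measurable_invFun := by
    show Measurable fun (S : Fin m → C) (i : ι) (k : κ i) => S (e ⟨i, k⟩)
    exact measurable_pi_lambda _ fun i => measurable_pi_lambda _ fun k =>
      measurable_pi_apply _

theorem flattenEquiv_apply (e : (Σ i, κ i) ≃ Fin m) (v : (i : ι) → κ i → C) (j : Fin m) :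
    flattenEquiv e v j = v (e.symm j).1 (e.symm j).2 := rfl

theorem flattenEquiv_measurePreserving (P : ι → Measure C) [∀ i, IsProbabilityMeasure (P i)]
    (e : (Σ i, κ i) ≃ Fin m) :
    MeasurePreserving (flattenEquiv (C := C) e)
      (Measure.pi fun i => Measure.pi fun _ : κ i => P i)
      (Measure.pi fun j => P (e.symm j).1) := by
  refine ⟨(flattenEquiv e).measurable, ?_⟩
  refine (Measure.pi_eq fun s hs => ?_).symm
  rw [Measure.map_apply (flattenEquiv e).measurable (MeasurableSet.univ_pi hs)]
  have hpre : (flattenEquiv (C := C) e) ⁻¹' Set.pi Set.univ s =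
      Set.pi Set.univ fun i => Set.pi Set.univ fun k => s (e ⟨i, k⟩) := by
    ext v
    simp only [Set.mem_preimage, Set.mem_pi, Set.mem_univ, forall_true_left]
    constructor
    · intro hv i k
      have h := hv (e ⟨i,k⟩)
      rwa [show (flattenEquiv (C := C) e) v (e ⟨i,k⟩) = v i k from by
        show v (e.symm (e ⟨i,k⟩)).1 (e.symm (e ⟨i,k⟩)).2 = v i k
        rw [e.symm_apply_apply]] at h
    · intro hv j
      show v (e.symm j).1 (e.symm j).2 ∈ s j
      have h := hv (e.symm j).1 (e.symm j).2
      rwa [Sigma.eta, e.apply_symm_apply] at h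
  rw [hpre, Measure.pi_pi]
  have hinner : ∀ i, (Measure.pi fun _ : κ i => P i) (Set.pi Set.univ fun k => s (e ⟨i,k⟩)) =
      ∏ k, P i (s (e ⟨i,k⟩)) := fun i => Measure.pi_pi _ _
  simp_rw [hinner]
  rw [show (∏ i, ∏ k, P i (s (e ⟨i,k⟩))) = ∏ x : Σ i, κ i, P x.1 (s (e x)) from by
    rw [← Finset.univ_sigma_univ, Finset.prod_sigma]]
  exact Fintype.prod_equiv e _ _ (fun x => by rw [e.symm_apply_apply])

theorem le_prod_fst {α β : Type*} [MeasurableSpace α] [MeasurableSpace β]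
    (μ : Measure α) (ν : Measure β) [SFinite ν] [IsProbabilityMeasure ν] (E : Set α) :
    μ E ≤ (μ.prod ν) (Prod.fst ⁻¹' E) := by
  set W := toMeasurable (μ.prod ν) (Prod.fst ⁻¹' E) with hW
  have hWm : MeasurableSet W := measurableSet_toMeasurable _ _
  have hsub : Prod.fst ⁻¹' E ⊆ W := subset_toMeasurable _ _
  have h1 : (μ.prod ν) (Prod.fst ⁻¹' E) = ∫⁻ a, ν (Prod.mk a ⁻¹' W) ∂μ := by
    rw [← measure_toMeasurable (Prod.fst ⁻¹' E), ← hW, Measure.prod_apply hWm]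
  have hset : E ⊆ {a | 1 ≤ ν (Prod.mk a ⁻¹' W)} := by
    intro a ha
    have hsub2 : (Set.univ : Set β) ⊆ Prod.mk a ⁻¹' W := fun b _ =>
      hsub (show (a, b) ∈ Prod.fst ⁻¹' E from ha)
    show (1 : ENNReal) ≤ ν (Prod.mk a ⁻¹' W)
    calc (1 : ENNReal) = ν Set.univ := measure_univ.symm
    _ ≤ ν (Prod.mk a ⁻¹' W) := measure_mono hsub2
  have hmeas : Measurable fun a => ν (Prod.mk a ⁻¹' W) := measurable_measure_prodMk_left hWm
  calc μ E ≤ μ {a | 1 ≤ ν (Prod.mk a ⁻¹' W)} := measure_mono hset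
  _ = 1 * μ {a | 1 ≤ ν (Prod.mk a ⁻¹' W)} := (one_mul _).symm
  _ ≤ ∫⁻ a, ν (Prod.mk a ⁻¹' W) ∂μ := mul_meas_ge_le_lintegral₀ hmeas.aemeasurable 1
  _ = (μ.prod ν) (Prod.fst ⁻¹' E) := h1.symm

end Plumb

end PlumbSec

section Helpers
variable {X : Type u} [MeasurableSpace X]

lemma risk_nonneg (Q : Measure (X × Bool)) (g : X → Bool) : 0 ≤ risk Q g :=
  ENNReal.toReal_nonneg

lemma risk_le_one (Q : Measure (X × Bool)) [IsProbabilityMeasure Q] (g : X → Bool) :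
    risk Q g ≤ 1 := by
  rw [risk]
  calc (Q _).toReal ≤ (1 : ENNReal).toReal :=
    ENNReal.toReal_mono ENNReal.one_ne_top prob_le_one
  _ = 1 := by simp

lemma dis_nonneg (Q : Measure (X × Bool)) (a b : X → Bool) : 0 ≤ dis Q a b :=
  ENNReal.toReal_nonneg

lemma dis_comm (Q : Measure (X × Bool)) (a b : X → Bool) : dis Q a b = dis Q b a := by
  rw [dis, dis]
  have h : {p : X × Bool | a p.1 ≠ b p.1} = {p : X × Bool | b p.1 ≠ a p.1} := by
    ext p; simp [ne_comm]
  rw [h]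

lemma dis_tri (Q : Measure (X × Bool)) [IsFiniteMeasure Q] (a b c : X → Bool) :
    dis Q a c ≤ dis Q a b + dis Q c b := by
  rw [dis, dis, dis]
  have hsub : {p : X × Bool | a p.1 ≠ c p.1} ⊆
      {p : X × Bool | a p.1 ≠ b p.1} ∪ {p : X × Bool | c p.1 ≠ b p.1} := by
    intro p hp
    by_contra hc
    simp only [Set.mem_setOf_eq, Set.mem_union, not_or, not_not] at hc hp
    exact hp (hc.1.trans hc.2.symm)
  have h1 : Q {p : X × Bool | a p.1 ≠ c p.1} ≤
      Q {p : X × Bool | a p.1 ≠ b p.1} + Q {p : X × Bool | c p.1 ≠ b p.1} :=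
    (measure_mono hsub).trans (measure_union_le _ _)
  have h2 := ENNReal.toReal_mono (by finiteness) h1
  rwa [ENNReal.toReal_add (by finiteness) (by finiteness)] at h2

lemma excess_eq {H : Set (X → Bool)} (Q : Measure (X × Bool)) {hstar : X → Bool}
    (hmem : hstar ∈ H) (hopt : ∀ h' ∈ H, risk Q hstar ≤ risk Q h') (g : X → Bool) :
    excess H Q g = risk Q g - risk Q hstar := by
  rw [excess]
  congr 1
  haveI : Nonempty H := ⟨⟨hstar, hmem⟩⟩
  apply le_antisymm
  · exact ciInf_le (f := fun h' : H => risk Q (h' : X → Bool))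
      ⟨0, by rintro r ⟨h', rfl⟩; exact risk_nonneg _ _⟩ ⟨hstar, hmem⟩
  · exact le_ciInf fun h' => hopt h' h'.2

lemma plog_ge_one (x : ℝ) : 1 ≤ plog x := le_max_right _ _

lemma eps_pos {d m : ℕ} (hm : 0 < m) {δ : ℝ} : 0 < eps d m δ := by
  rw [eps]
  have h1 : (0:ℝ) < 1 / m := by positivity
  have h2 : (0:ℝ) < (1/m) * plog (1/δ) :=
    mul_pos h1 (lt_of_lt_of_le one_pos (plog_ge_one _))
  have h3 : (0:ℝ) ≤ ((d:ℝ)/m) * plog ((m:ℝ)/d) :=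
    mul_nonneg (by positivity) (le_trans zero_le_one (plog_ge_one _))
  linarith

lemma jensen_rpow {ι : Type*} (s : Finset ι) (w z : ι → ℝ) (hw : ∀ i ∈ s, 0 ≤ w i)
    (hw1 : ∑ i ∈ s, w i = 1) (hz : ∀ i ∈ s, 0 ≤ z i) {β : ℝ} (hβ0 : 0 ≤ β) (hβ1 : β ≤ 1) :
    ∑ i ∈ s, w i * z i ^ β ≤ (∑ i ∈ s, w i * z i) ^ β := by
  rcases eq_or_lt_of_le hβ0 with hβz | hβpos
  · rw [← hβz]
    simp only [Real.rpow_zero, mul_one]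
    rw [hw1]
  · have h := Real.arith_mean_le_rpow_mean s w (fun i => z i ^ β) hw hw1
      (fun i hi => Real.rpow_nonneg (hz i hi) β) (p := 1/β)
      (by rw [le_div_iff₀ hβpos]; linarith)
    have heq : ∀ i ∈ s, w i * (z i ^ β) ^ (1/β) = w i * z i := by
      intro i hi
      rw [← Real.rpow_mul (hz i hi), mul_one_div, div_self (ne_of_gt hβpos), Real.rpow_one]
    rw [Finset.sum_congr rfl heq, one_div_one_div] at h
    exact h

lemma avg_bern {ι : Type*} (s : Finset ι) (w : ι → ℝ) (hw : ∀ i ∈ s, 0 ≤ w i)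
    (hw1 : ∑ i ∈ s, w i = 1) (D E : ι → ℝ) (hE : ∀ i ∈ s, 0 ≤ E i) {Cb β : ℝ}
    (hCb : 0 ≤ Cb) (hβ0 : 0 ≤ β) (hβ1 : β ≤ 1)
    (hD : ∀ i ∈ s, D i ≤ Cb * (E i ^ β + (0:ℝ) ^ β)) :
    ∑ i ∈ s, w i * D i ≤ Cb * ((∑ i ∈ s, w i * E i) ^ β + (0:ℝ) ^ β) := by
  have step1 : ∑ i ∈ s, w i * D i ≤ ∑ i ∈ s, w i * (Cb * (E i ^ β + (0:ℝ) ^ β)) :=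
    Finset.sum_le_sum fun i hi => mul_le_mul_of_nonneg_left (hD i hi) (hw i hi)
  have step2 : ∑ i ∈ s, w i * (Cb * (E i ^ β + (0:ℝ) ^ β)) =
      Cb * (∑ i ∈ s, w i * E i ^ β) + (Cb * (0:ℝ) ^ β) * ∑ i ∈ s, w i := by
    rw [Finset.mul_sum, Finset.mul_sum, ← Finset.sum_add_distrib]
    exact Finset.sum_congr rfl fun i hi => by ring
  have step3 := jensen_rpow s w E hw hw1 hE hβ0 hβ1
  have step4 := mul_le_mul_of_nonneg_left step3 hCb
  calc ∑ i ∈ s, w i * D i ≤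
      Cb * (∑ i ∈ s, w i * E i ^ β) + (Cb * (0:ℝ) ^ β) * ∑ i ∈ s, w i :=
        step1.trans_eq step2
  _ = Cb * (∑ i ∈ s, w i * E i ^ β) + Cb * (0:ℝ) ^ β := by rw [hw1, mul_one]
  _ ≤ Cb * ((∑ i ∈ s, w i * E i) ^ β) + Cb * (0:ℝ) ^ β := by linarith
  _ = Cb * ((∑ i ∈ s, w i * E i) ^ β + (0:ℝ) ^ β) := by ring

end Helpers

/-- Lemma: excess risk of constrained hypotheses under the
mixture of tasks.  Let `Π = ∏_t P_t^{n_t}` be such that some single `h* ∈ H`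
minimizes risk under every `P_t` and every `P_t` satisfies the Bernstein class
condition with parameters `(C_β, β)`.  Fix `I ⊆ [N+1]` and let
`P̄_I = N_I⁻¹ Σ_{t ∈ I} n_t P_t` with `N_I = Σ_{t ∈ I} n_t`.  With probability at
least `1 - δ`, every `h ∈ H` satisfying the empirical constraint
`Ê_{Z^I}(h; ĥ_{Z^I}) ≤ C₀ √(P̂_{Z^I}(h ≠ ĥ_{Z^I}) ε(N_I, δ)) + C₀ ε(N_I, δ)`
also satisfies `E_{P̄_I}(h) ≤ 32 C₀² (C_β ε(N_I, δ))^{1/(2-β)}`. -/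
theorem statement16 (C0 : ℝ) (hC0 : 0 < C0) (hUB : UnifBernstein.{u} C0) :
    ∀ (X : Type u) (_ : MeasurableSpace X) (H : Set (X → Bool)) (d : ℕ),
      VCEq H d →
      ∀ (N : ℕ) (n : Fin (N + 1) → ℕ) (P : Fin (N + 1) → Measure (X × Bool)) (Cb β : ℝ),
        (∀ t, IsProbabilityMeasure (P t)) →
        (∃ hstar ∈ H, ∀ t, IsOpt H (P t) hstar) →
        (∀ t, Bernstein H (P t) Cb β) →
        2 ≤ Cb → 0 ≤ β → β ≤ 1 →
        ∀ I : Finset (Fin (N + 1)), I.Nonempty →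
        ∀ δ : ℝ, 0 < δ → δ < 1 →
          ENNReal.ofReal (1 - δ) ≤
            msM P n {Z | ∀ erm, IsERMAgg H Z I erm →
              ∀ h ∈ H,
                empRiskAgg Z I h - empRiskAgg Z I erm ≤
                    C0 * Real.sqrt (empDisAgg Z I h erm * eps d (∑ t ∈ I, n t) δ)
                      + C0 * eps d (∑ t ∈ I, n t) δ →
                excess H
                    (((∑ t ∈ I, n t : ℕ) : ENNReal)⁻¹ • ∑ t ∈ I, ((n t : ENNReal) • P t)) h ≤
                  32 * C0 ^ 2 * (Cb * eps d (∑ t ∈ I, n t) δ) ^ (1 / (2 - β))} := by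
  intro X mX H d hVC N n P Cb β hPprob hoptex hbern hCb hβ0 hβ1 I hIne δ hδ0 hδ1
  classical
  have hC034 : (0.34:ℝ) ≤ C0 := c0_lower hC0 hUB
  obtain ⟨hstar, hstarH, hstaropt⟩ := hoptex
  haveI hPinst : ∀ t, IsProbabilityMeasure (P t) := hPprob
  have heps0 : ∀ m' : ℕ, (0:ℝ) ≤ eps d m' δ := by
    intro m'
    rw [eps]
    have h1 : (0:ℝ) ≤ ((d:ℝ)/m') * plog ((m':ℝ)/d) :=
      mul_nonneg (by positivity) (le_trans zero_le_one (plog_ge_one _))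
    have h2 : (0:ℝ) ≤ (1/(m':ℝ)) * plog (1/δ) :=
      mul_nonneg (by positivity) (le_trans zero_le_one (plog_ge_one _))
    linarith
  rcases Nat.eq_zero_or_pos (∑ t ∈ I, n t) with hm0 | hmpos
  · -- degenerate case : no samples
    have hmem : ∀ Z : (t : Fin (N+1)) → Fin (n t) → X × Bool, ∀ erm, IsERMAgg H Z I erm →
        ∀ h ∈ H, (empRiskAgg Z I h - empRiskAgg Z I erm ≤
            C0 * Real.sqrt (empDisAgg Z I h erm * eps d (∑ t ∈ I, n t) δ)
              + C0 * eps d (∑ t ∈ I, n t) δ) →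
        excess H (((∑ t ∈ I, n t : ℕ) : ENNReal)⁻¹ • ∑ t ∈ I, ((n t : ENNReal) • P t)) h ≤
          32 * C0 ^ 2 * (Cb * eps d (∑ t ∈ I, n t) δ) ^ (1 / (2 - β)) := by
      intro Z erm _ h hH _
      have hzero : (∑ t ∈ I, ((n t : ENNReal) • P t)) = 0 := by
        apply Finset.sum_eq_zero
        intro t ht
        have hnt : n t = 0 := by
          have := (Finset.sum_eq_zero_iff (s := I) (f := n)).mp hm0 t ht
          exact this
        rw [hnt]
        simp
      rw [hzero, smul_zero]
      have hrisk0 : ∀ g : X → Bool, risk (0 : Measure (X × Bool)) g = 0 := by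
        intro g
        rw [risk]
        simp
      have hexc : excess H (0 : Measure (X × Bool)) h = 0 := by
        rw [excess, hrisk0]
        haveI : Nonempty H := ⟨⟨h, hH⟩⟩
        have hinf : (⨅ h' : H, risk (0 : Measure (X × Bool)) (h' : X → Bool)) = 0 := by
          simp only [hrisk0]
          exact ciInf_const
        rw [hinf, sub_zero]
      rw [hexc]
      have hb : (0:ℝ) ≤ Cb * eps d (∑ t ∈ I, n t) δ :=
        mul_nonneg (by linarith) (heps0 _)
      positivity
    refine le_trans ?_ (measure_mono (s := Set.univ) (fun Z _ => hmem Z))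
    haveI hms : IsProbabilityMeasure (msM P n) := by
      unfold msM
      infer_instance
    calc ENNReal.ofReal (1 - δ) ≤ 1 := ENNReal.ofReal_le_one.mpr (by linarith)
    _ = msM P n Set.univ := measure_univ.symm
  · -- main case
    set m := ∑ t ∈ I, n t with hm
    have hcard : Fintype.card ((t : {t // t ∈ I}) × Fin (n t.1)) = m := by
      rw [Fintype.card_sigma]
      simp only [Fintype.card_fin]
      rw [hm]
      exact Finset.sum_coe_sort I n
    set e : ((t : {t // t ∈ I}) × Fin (n t.1)) ≃ Fin m := Fintype.equivFinOfCardEq hcard with he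
    set μ : Fin m → Measure (X × Bool) := fun j => P ((e.symm j).1 : Fin (N+1)) with hμ
    haveI hμprob : ∀ j, IsProbabilityMeasure (μ j) := fun j => hPprob _
    have hUB' := hUB X mX H d hVC m hmpos δ hδ0 hδ1 μ hμprob
    set flat : ((t : Fin (N+1)) → Fin (n t) → X × Bool) → (Fin m → X × Bool) :=
      fun Z => flattenEquiv (C := X × Bool) e (fun t : {t // t ∈ I} => Z t.1) with hflat
    have hbridge : ∀ E : Set (Fin m → X × Bool),
        ENNReal.ofReal (1 - δ) ≤ Measure.pi μ E →
        ENNReal.ofReal (1 - δ) ≤ msM P n (flat ⁻¹' E) := by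
      intro E hle
      have hmp1 := measurePreserving_piEquivPiSubtypeProd
        (fun t : Fin (N+1) => Measure.pi fun _ : Fin (n t) => P t) (fun t => t ∈ I)
      have hmp2 := flattenEquiv_measurePreserving (fun t : {t // t ∈ I} => P t.1) e
      haveI : IsProbabilityMeasure
          (Measure.pi fun t : {t // ¬ t ∈ I} => Measure.pi fun _ : Fin (n t.1) => P t.1) := by
        infer_instance
      calc ENNReal.ofReal (1 - δ) ≤ Measure.pi μ E := hle
      _ = (Measure.pi fun t : {t // t ∈ I} => Measure.pi fun _ : Fin (n t.1) => P t.1)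
            ((flattenEquiv (C := X × Bool) e) ⁻¹' E) := by
          rw [hμ, ← hmp2.map_eq, MeasurableEquiv.map_apply]
      _ ≤ ((Measure.pi fun t : {t // t ∈ I} => Measure.pi fun _ : Fin (n t.1) => P t.1).prod
            (Measure.pi fun t : {t // ¬ t ∈ I} => Measure.pi fun _ : Fin (n t.1) => P t.1))
            (Prod.fst ⁻¹' ((flattenEquiv (C := X × Bool) e) ⁻¹' E)) := le_prod_fst _ _ _
      _ = msM P n ((MeasurableEquiv.piEquivPiSubtypeProd
            (fun t : Fin (N+1) => Fin (n t) → X × Bool) (fun t => t ∈ I)) ⁻¹'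
            (Prod.fst ⁻¹' ((flattenEquiv (C := X × Bool) e) ⁻¹' E))) := by
          rw [← MeasurableEquiv.map_apply]
          congr 1
          convert hmp1.map_eq.symm using 2
          congr 1
          exact Subsingleton.elim _ _
          rfl
      _ = msM P n (flat ⁻¹' E) := rfl
    refine le_trans (hbridge _ hUB') (measure_mono ?_)
    intro Z hZS
    intro erm hermAgg h hH hcon
    have ermH : erm ∈ H := hermAgg.1
    set S : Fin m → X × Bool := flat Z with hS
    set ε := eps d m δ with hεdef
    have hε : 0 < ε := eps_pos hmpos
    have hmR : (0:ℝ) < m := by exact_mod_cast hmpos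
    -- sum translations
    have hSval : ∀ j, S j = Z ((e.symm j).1 : Fin (N+1)) (e.symm j).2 := fun j => rfl
    have hsumP : ∀ f : X × Bool → ℝ, ∑ j, f (S j) = ∑ t ∈ I, ∑ i, f (Z t i) := by
      intro f
      calc ∑ j, f (S j)
          = ∑ x : (t : {t // t ∈ I}) × Fin (n t.1), f (S (e x)) := (Equiv.sum_comp e _).symm
      _ = ∑ x : (t : {t // t ∈ I}) × Fin (n t.1), f (Z x.1.1 x.2) := by
          apply Finset.sum_congr rfl
          intro x _
          rw [hSval]
          rw [e.symm_apply_apply]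
      _ = ∑ t : {t // t ∈ I}, ∑ i : Fin (n t.1), f (Z t.1 i) := by
          rw [← Finset.univ_sigma_univ, Finset.sum_sigma]
      _ = ∑ t ∈ I, ∑ i, f (Z t i) :=
          Finset.sum_coe_sort I (fun v => ∑ i : Fin (n v), f (Z v i))
    have hsumT : ∀ F : Fin (N+1) → ℝ,
        ∑ j, F ((e.symm j).1 : Fin (N+1)) = ∑ t ∈ I, (n t : ℝ) * F t := by
      intro F
      calc ∑ j, F ((e.symm j).1 : Fin (N+1))
          = ∑ x : (t : {t // t ∈ I}) × Fin (n t.1), F ((e.symm (e x)).1 : Fin (N+1)) :=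
            (Equiv.sum_comp e _).symm
      _ = ∑ x : (t : {t // t ∈ I}) × Fin (n t.1), F x.1.1 := by
          apply Finset.sum_congr rfl
          intro x _
          rw [e.symm_apply_apply]
      _ = ∑ t : {t // t ∈ I}, ∑ _i : Fin (n t.1), F t.1 := by
          rw [← Finset.univ_sigma_univ, Finset.sum_sigma]
      _ = ∑ t : {t // t ∈ I}, (n t.1 : ℝ) * F t.1 := by
          apply Finset.sum_congr rfl
          intro t _
          rw [Finset.sum_const, Finset.card_univ, Fintype.card_fin, nsmul_eq_mul]
      _ = ∑ t ∈ I, (n t : ℝ) * F t := Finset.sum_coe_sort I (fun v => (n v : ℝ) * F v)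
    have hcastm : ((m : ℕ) : ℝ) = ∑ t ∈ I, (n t : ℝ) := by
      rw [hm]
      exact Nat.cast_sum I n
    have hemp : ∀ g : X → Bool, empRisk S g = empRiskAgg Z I g := by
      intro g
      rw [empRisk, empRiskAgg, hsumP (fun p => if g p.1 ≠ p.2 then (1:ℝ) else 0), hcastm]
    have hempD : ∀ g g' : X → Bool, empDis S g g' = empDisAgg Z I g g' := by
      intro g g'
      rw [empDis, empDisAgg, hsumP (fun p => if g p.1 ≠ g' p.1 then (1:ℝ) else 0), hcastm]
    have hriskSum : ∀ g : X → Bool, ∑ j, risk (μ j) g = ∑ t ∈ I, (n t : ℝ) * risk (P t) g :=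
      fun g => hsumT (fun t => risk (P t) g)
    have hdisSum : ∀ g g' : X → Bool,
        ∑ j, dis (μ j) g g' = ∑ t ∈ I, (n t : ℝ) * dis (P t) g g' :=
      fun g g' => hsumT (fun t => dis (P t) g g')
    -- real quantities
    set Rg : (X → Bool) → ℝ := fun g => ∑ t ∈ I, (n t : ℝ) * risk (P t) g with hRg
    set x := (Rg h - Rg hstar) / m with hx
    set y := (Rg erm - Rg hstar) / m with hy
    set Dx := (∑ t ∈ I, (n t : ℝ) * dis (P t) h hstar) / m with hDxdef
    set Dy := (∑ t ∈ I, (n t : ℝ) * dis (P t) erm hstar) / m with hDydef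
    -- basic facts
    have hRmono : ∀ g ∈ H, Rg hstar ≤ Rg g := by
      intro g hg
      apply Finset.sum_le_sum
      intro t _
      exact mul_le_mul_of_nonneg_left ((hstaropt t).2 g hg) (Nat.cast_nonneg _)
    have hRub : ∀ g : X → Bool, Rg g ≤ m := by
      intro g
      rw [hcastm]
      apply Finset.sum_le_sum
      intro t _
      calc (n t : ℝ) * risk (P t) g ≤ (n t : ℝ) * 1 :=
        mul_le_mul_of_nonneg_left (risk_le_one _ _) (Nat.cast_nonneg _)
      _ = (n t : ℝ) := mul_one _
    have hRlb : ∀ g : X → Bool, 0 ≤ Rg g := by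
      intro g
      apply Finset.sum_nonneg
      intro t _
      exact mul_nonneg (Nat.cast_nonneg _) (risk_nonneg _ _)
    have hx0 : 0 ≤ x := div_nonneg (sub_nonneg.mpr (hRmono h hH)) hmR.le
    have hy0 : 0 ≤ y := div_nonneg (sub_nonneg.mpr (hRmono erm ermH)) hmR.le
    have hx1 : x ≤ 1 := by
      rw [hx, div_le_one hmR]
      have := hRub h
      have := hRlb hstar
      linarith
    -- weights
    set w : Fin (N+1) → ℝ := fun t => (n t : ℝ) / m with hw
    have hw0 : ∀ t ∈ I, 0 ≤ w t := fun t _ => div_nonneg (Nat.cast_nonneg _) hmR.le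
    have hw1 : ∑ t ∈ I, w t = 1 := by
      rw [hw, ← Finset.sum_div, ← hcastm, div_self (ne_of_gt hmR)]
    have hdivsum : ∀ v : Fin (N+1) → ℝ,
        (∑ t ∈ I, (n t : ℝ) * v t) / m = ∑ t ∈ I, w t * v t := by
      intro v
      rw [Finset.sum_div]
      exact Finset.sum_congr rfl fun t _ => by rw [hw]; ring
    -- Bernstein aggregation
    have hbernT : ∀ g ∈ H, ∀ t ∈ I, dis (P t) g hstar ≤
        Cb * ((risk (P t) g - risk (P t) hstar) ^ β + (0:ℝ) ^ β) := by
      intro g hg t _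
      obtain ⟨hst, hstopt, hstineq⟩ := hbern t
      have hexc : ∀ g' : X → Bool, excess H (P t) g' = risk (P t) g' - risk (P t) hstar :=
        excess_eq (P t) hstarH ((hstaropt t).2)
      have d1 : dis (P t) g hst ≤ Cb * (risk (P t) g - risk (P t) hstar) ^ β := by
        have := hstineq g hg
        rwa [hexc g] at this
      have d2 : dis (P t) hstar hst ≤ Cb * (0:ℝ) ^ β := by
        have := hstineq hstar hstarH
        rwa [hexc hstar, sub_self] at this
      have tri := dis_tri (P t) g hst hstar
      calc dis (P t) g hstar ≤ dis (P t) g hst + dis (P t) hstar hst := tri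
      _ ≤ Cb * (risk (P t) g - risk (P t) hstar) ^ β + Cb * (0:ℝ) ^ β := add_le_add d1 d2
      _ = Cb * ((risk (P t) g - risk (P t) hstar) ^ β + (0:ℝ) ^ β) := by ring
    have hDagg : ∀ g ∈ H, (∑ t ∈ I, (n t : ℝ) * dis (P t) g hstar) / m ≤
        Cb * (((Rg g - Rg hstar) / m) ^ β + (0:ℝ) ^ β) := by
      intro g hg
      rw [hdivsum]
      have hE0 : ∀ t ∈ I, 0 ≤ risk (P t) g - risk (P t) hstar :=
        fun t _ => sub_nonneg.mpr ((hstaropt t).2 g hg)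
      have := avg_bern I w hw0 hw1 (fun t => dis (P t) g hstar)
        (fun t => risk (P t) g - risk (P t) hstar) hE0 (by linarith) hβ0 hβ1 (hbernT g hg)
      have heq : ∑ t ∈ I, w t * (risk (P t) g - risk (P t) hstar) = (Rg g - Rg hstar) / m := by
        rw [← hdivsum, hRg]
        congr 1
        rw [← Finset.sum_sub_distrib]
        exact Finset.sum_congr rfl fun t _ => by ring
      rwa [heq] at this
    have hDxB : Dx ≤ Cb * (x ^ β + (0:ℝ) ^ β) := hDagg h hH
    have hDyB : Dy ≤ Cb * (y ^ β + (0:ℝ) ^ β) := hDagg erm ermH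
    -- event components
    have hDflat : ∀ g g' : X → Bool,
        (∑ j, dis (μ j) g g') / ((m : ℕ) : ℝ) = (∑ t ∈ I, (n t : ℝ) * dis (P t) g g') / m := by
      intro g g'
      rw [hdisSum]
    have hxflat : (∑ j, (risk (μ j) h - risk (μ j) hstar)) / ((m : ℕ) : ℝ) = x := by
      rw [Finset.sum_sub_distrib, hriskSum, hriskSum]
    have hyflat : (∑ j, (risk (μ j) erm - risk (μ j) hstar)) / ((m : ℕ) : ℝ) = y := by
      rw [Finset.sum_sub_distrib, hriskSum, hriskSum]
    have hev1 := (hZS h hH hstar hstarH)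
    have hev2 := (hZS erm ermH hstar hstarH)
    have conj1 := hev1.1
    have conj3 := hev1.2.2
    have conj1' := hev2.1
    have conj3' := hev2.2.2
    rw [hxflat] at conj1
    rw [hyflat] at conj1'
    rw [hDflat, hDxdef.symm] at conj3
    rw [hDflat, hDydef.symm] at conj3'
    -- bound min-terms
    have hmin1 : C0 * Real.sqrt
        (min ((∑ j, dis (μ j) h hstar) / ((m : ℕ) : ℝ)) (empDis S h hstar) * ε) ≤
        C0 * Real.sqrt (Dx * ε) := by
      apply mul_le_mul_of_nonneg_left _ hC0.le
      apply Real.sqrt_le_sqrt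
      apply mul_le_mul_of_nonneg_right _ hε.le
      rw [hDflat, ← hDxdef]
      exact min_le_left _ _
    have hmin2 : C0 * Real.sqrt
        (min ((∑ j, dis (μ j) erm hstar) / ((m : ℕ) : ℝ)) (empDis S erm hstar) * ε) ≤
        C0 * Real.sqrt (Dy * ε) := by
      apply mul_le_mul_of_nonneg_left _ hC0.le
      apply Real.sqrt_le_sqrt
      apply mul_le_mul_of_nonneg_right _ hε.le
      rw [hDflat, ← hDydef]
      exact min_le_left _ _
    -- ERM facts
    have hermS : empRisk S erm ≤ empRisk S hstar := by
      rw [hemp, hemp]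
      exact hermAgg.2 hstar hstarH
    have hconS : empRisk S h - empRisk S erm ≤
        C0 * Real.sqrt (empDis S h erm * ε) + C0 * ε := by
      rw [hemp, hemp, hempD]
      exact hcon
    -- key hypotheses
    have h1k : x ≤ (empRisk S h - empRisk S hstar) + C0 * Real.sqrt (Dx * ε) + C0 * ε := by
      have := conj1
      rw [empExcess] at this
      linarith [hmin1]
    have hExk : empRisk S h - empRisk S hstar ≤
        C0 * Real.sqrt (empDis S h erm * ε) + C0 * ε := by
      linarith [hconS, hermS]
    have h2k : y ≤ C0 * Real.sqrt (Dy * ε) + C0 * ε := by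
      have := conj1'
      rw [empExcess] at this
      linarith [hmin2, hermS]
    have hdxyk : empDis S h erm ≤ 2 * Dx + C0 * ε + (2 * Dy + C0 * ε) := by
      have htri : empDis S h erm ≤ empDis S h hstar + empDis S erm hstar := by
        rw [empDis, empDis, empDis, ← add_div]
        have hbool : ∀ p q r : Bool, (if p ≠ r then (1:ℝ) else 0) ≤
            (if p ≠ q then (1:ℝ) else 0) + (if r ≠ q then (1:ℝ) else 0) := by
          intro p q r
          cases p <;> cases q <;> cases r <;> norm_num
        have hnum : (∑ j, if h (S j).1 ≠ erm (S j).1 then (1:ℝ) else 0) ≤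
            ∑ j, ((if h (S j).1 ≠ hstar (S j).1 then (1:ℝ) else 0) +
              (if erm (S j).1 ≠ hstar (S j).1 then (1:ℝ) else 0)) :=
          Finset.sum_le_sum fun j _ => hbool _ _ _
        rw [Finset.sum_add_distrib] at hnum
        gcongr
      linarith [conj3, conj3']
    -- conclude via key
    have hfinal := key hC034 hCb hβ0 hβ1 hε hx0 hx1 hy0 hDxB hDyB h1k hExk h2k hdxyk
    -- rewrite goal
    have hriskMix : ∀ g : X → Bool,
        risk (((m : ℕ) : ENNReal)⁻¹ • ∑ t ∈ I, ((n t : ENNReal) • P t)) g = Rg g / m := by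
      intro g
      rw [risk]
      have h1 : ((((m : ℕ) : ENNReal))⁻¹ • ∑ t ∈ I, ((n t : ENNReal) • P t))
          {p : X × Bool | g p.1 ≠ p.2}
          = (((m : ℕ) : ENNReal))⁻¹ * ∑ t ∈ I, (n t : ENNReal) *
              P t {p : X × Bool | g p.1 ≠ p.2} := by
        rw [Measure.smul_apply, smul_eq_mul]
        congr 1
        rw [Measure.coe_finset_sum, Finset.sum_apply]
        exact Finset.sum_congr rfl fun t _ => by rw [Measure.smul_apply, smul_eq_mul]
      rw [h1, ENNReal.toReal_mul, ENNReal.toReal_inv, ENNReal.toReal_natCast]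
      rw [ENNReal.toReal_sum
        (fun t _ => ENNReal.mul_ne_top (ENNReal.natCast_ne_top _) (measure_ne_top _ _))]
      rw [inv_mul_eq_div, hRg]
      congr 1
      exact Finset.sum_congr rfl fun t _ => by
        rw [ENNReal.toReal_mul, ENNReal.toReal_natCast]; rfl
    have hPbarOpt : ∀ h' ∈ H, risk (((m : ℕ) : ENNReal)⁻¹ • ∑ t ∈ I, ((n t : ENNReal) • P t))
        hstar ≤ risk (((m : ℕ) : ENNReal)⁻¹ • ∑ t ∈ I, ((n t : ENNReal) • P t)) h' := by
      intro h' hh'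
      rw [hriskMix, hriskMix]
      gcongr
      exact hRmono h' hh'
    have hgoal : excess H (((m : ℕ) : ENNReal)⁻¹ • ∑ t ∈ I, ((n t : ENNReal) • P t)) h = x := by
      rw [excess_eq _ hstarH hPbarOpt h, hriskMix, hriskMix, div_sub_div_same, hx]
    rw [hgoal]
    exact hfinal

end Paper
end
end
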